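/- arXiv:0812.4470 — 5 statements merged into one kernel-verified Lean document; each statement's English description precedes it below -/
import Mathlib

section
/- For every integer k ≥ 7, the Thue–Morse word t contains two distinct factors of length k each of which has 01 as a prefix and 01 as a suffix (i.e., two distinct factors of the form 01x01). -/
/-- The Thue–Morse morphism θ (0 ↦ 01, 1 ↦ 10), with 0 = `false`, 1 = `true`,
applied letterwise to a word. -/
def tmMap (w : List Bool) : List Bool :=
  w.flatMap (fun b => if b then [true, false] else [false, true])

/-- A word is cubefree if it contains no non-empty factor of the form `x ++ x ++ x`. -/
def Cubefree (w : List Bool) : Prop :=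
  ∀ x : List Bool, x ≠ [] → ¬ (x ++ x ++ x) <:+: w

/-- `w` is a factor of the Thue–Morse word `t = θ^ω(0)`: since the words `θ^m(0)`
are prefixes of `t` whose lengths tend to infinity, this holds iff `w` is an
infix of `θ^m(0)` for some `m`. -/
def FactorTM (w : List Bool) : Prop :=
  ∃ m : ℕ, w <:+: tmMap^[m] [false]

/-- The binary morphism determined by `h : Bool → List Bool` is cubefree. -/
def CubefreeMorphism (h : Bool → List Bool) : Prop :=
  ∀ w : List Bool, Cubefree w → Cubefree (w.flatMap h)

/-! ### The Thue–Morse sequence as a function `ℕ → Bool` -/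

/-- The Thue–Morse sequence: parity of the binary digit sum. -/
def tmB (n : ℕ) : Bool := ((Nat.digits 2 n).sum % 2 == 1)

lemma tmB_even (n : ℕ) : tmB (2*n) = tmB n := by
  rcases Nat.eq_zero_or_pos n with h | h
  · subst h; rfl
  · unfold tmB
    rw [Nat.digits_def' (by norm_num : (1:ℕ) < 2) (by omega)]
    simp [Nat.mul_div_cancel_left _ (by norm_num : 0 < 2), Nat.mul_mod_right]

lemma tmB_odd (n : ℕ) : tmB (2*n+1) = !tmB n := by
  unfold tmB
  rw [Nat.digits_def' (by norm_num : (1:ℕ) < 2) (by omega),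
    (by omega : (2*n+1) % 2 = 1), (by omega : (2*n+1) / 2 = n)]
  rw [List.sum_cons]
  rcases Nat.even_or_odd (Nat.digits 2 n).sum with ⟨c, hc⟩ | ⟨c, hc⟩ <;> rw [hc]
  · rw [(by omega : (1+(c+c)) % 2 = 1), (by omega : (c+c) % 2 = 0)]; rfl
  · rw [(by omega : (1+(2*c+1)) % 2 = 0), (by omega : (2*c+1) % 2 = 1)]; rfl

lemma tmB_vals : tmB 0 = false ∧ tmB 1 = true ∧ tmB 2 = true ∧ tmB 3 = false ∧
    tmB 5 = false ∧ tmB 6 = false := by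
  refine ⟨?_, ?_, ?_, ?_, ?_, ?_⟩ <;> norm_num [tmB]

/-- Key existence lemma: zeros/ones of the Thue–Morse sequence at any prescribed
distance `n` : (Q) two zeros at distance `n`; (R) a zero followed (at distance `n`)
by a one, for `n ≥ 1`; (R') a one followed by a zero, for `n ≥ 1`. -/
lemma QRR : ∀ n : ℕ,
    (∃ m, tmB m = false ∧ tmB (m+n) = false) ∧
    (1 ≤ n → ∃ a, tmB a = false ∧ tmB (a+n) = true) ∧
    (1 ≤ n → ∃ a, tmB a = true ∧ tmB (a+n) = false) := by
  intro n
  induction n using Nat.strong_induction_on with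
  | _ n ih =>
    obtain ⟨h0, h1, h2, h3, h5, h6⟩ := tmB_vals
    rcases n with _ | n'
    · exact ⟨⟨0, h0, h0⟩, by omega, by omega⟩
    set n := n' + 1 with hn
    refine ⟨?_, fun _ => ?_, fun _ => ?_⟩
    · -- Q n
      rcases Nat.even_or_odd n with ⟨f, hf⟩ | ⟨g, hg⟩
      · obtain ⟨m, hm1, hm2⟩ := (ih f (by omega)).1
        exact ⟨2*m, by rwa [tmB_even], by rw [(by omega : 2*m + n = 2*(m+f)), tmB_even]; exact hm2⟩
      · rcases Nat.eq_zero_or_pos g with hg0 | hg0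
        · exact ⟨5, h5, by rw [(by omega : 5 + n = 6)]; exact h6⟩
        · obtain ⟨a, ha1, ha2⟩ := (ih g (by omega)).2.1 hg0
          refine ⟨2*a, by rwa [tmB_even], ?_⟩
          rw [(by omega : 2*a + n = 2*(a+g)+1), tmB_odd, ha2]; rfl
    · -- R n
      rcases Nat.even_or_odd n with ⟨f, hf⟩ | ⟨g, hg⟩
      · obtain ⟨a, ha1, ha2⟩ := (ih f (by omega)).2.1 (by omega)
        exact ⟨2*a, by rwa [tmB_even], by rw [(by omega : 2*a + n = 2*(a+f)), tmB_even]; exact ha2⟩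
      · rcases Nat.eq_zero_or_pos g with hg0 | hg0
        · exact ⟨0, h0, by rw [(by omega : 0 + n = 1)]; exact h1⟩
        · obtain ⟨m, hm1, hm2⟩ := (ih g (by omega)).1
          refine ⟨2*m, by rwa [tmB_even], ?_⟩
          rw [(by omega : 2*m + n = 2*(m+g)+1), tmB_odd, hm2]; rfl
    · -- R' n
      rcases Nat.even_or_odd n with ⟨f, hf⟩ | ⟨g, hg⟩
      · obtain ⟨a, ha1, ha2⟩ := (ih f (by omega)).2.2 (by omega)
        exact ⟨2*a, by rwa [tmB_even], by rw [(by omega : 2*a + n = 2*(a+f)), tmB_even]; exact ha2⟩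
      · rcases Nat.eq_zero_or_pos g with hg0 | hg0
        · exact ⟨2, h2, by rw [(by omega : 2 + n = 3)]; exact h3⟩
        · obtain ⟨m, hm1, hm2⟩ := (ih (g+1) (by omega)).1
          refine ⟨2*m+1, by rw [tmB_odd, hm1]; rfl, ?_⟩
          rw [(by omega : 2*m+1 + n = 2*(m+(g+1))), tmB_even]; exact hm2

/-- An occurrence of `01` in Thue–Morse followed, at distance `g`, by a `1`. -/
lemma lemX (g : ℕ) (hg : 2 ≤ g) :
    ∃ c, tmB c = false ∧ tmB (c+1) = true ∧ tmB (c+g) = true := by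
  rcases Nat.even_or_odd g with ⟨h, hh⟩ | ⟨h, hh⟩
  · obtain ⟨a, ha1, ha2⟩ := (QRR h).2.1 (by omega)
    refine ⟨2*a, by rwa [tmB_even], by rw [tmB_odd, ha1]; rfl, ?_⟩
    rw [(by omega : 2*a+g = 2*(a+h)), tmB_even]; exact ha2
  · obtain ⟨a, ha1, ha2⟩ := (QRR h).1
    refine ⟨2*a, by rwa [tmB_even], by rw [tmB_odd, ha1]; rfl, ?_⟩
    rw [(by omega : 2*a+g = 2*(a+h)+1), tmB_odd, ha2]; rfl

/-- An occurrence of `01` in Thue–Morse followed, at distance `g`, by a `0`. -/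
lemma lemY (g : ℕ) (hg : 2 ≤ g) :
    ∃ c, tmB c = false ∧ tmB (c+1) = true ∧ tmB (c+g) = false := by
  rcases Nat.even_or_odd g with ⟨h, hh⟩ | ⟨h, hh⟩
  · obtain ⟨a, ha1, ha2⟩ := (QRR h).1
    refine ⟨2*a, by rwa [tmB_even], by rw [tmB_odd, ha1]; rfl, ?_⟩
    rw [(by omega : 2*a+g = 2*(a+h)), tmB_even]; exact ha2
  · obtain ⟨a, ha1, ha2⟩ := (QRR h).2.1 (by omega)
    refine ⟨2*a, by rwa [tmB_even], by rw [tmB_odd, ha1]; rfl, ?_⟩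
    rw [(by omega : 2*a+g = 2*(a+h)+1), tmB_odd, ha2]; rfl

/-! ### Windows of the Thue–Morse word -/

/-- The length-`k` window of the Thue–Morse word starting at position `p`. -/
def win (p k : ℕ) : List Bool := (List.range k).map (fun i => tmB (p + i))

@[simp] lemma win_length (p k : ℕ) : (win p k).length = k := by simp [win]

lemma win_getElem (p k i : ℕ) (hi : i < k) : (win p k)[i]'(by simpa [win]) = tmB (p+i) := by
  simp [win]

lemma win_append (a b c : ℕ) : win a b ++ win (a+b) c = win a (b+c) := by
  unfold win
  rw [List.range_add, List.map_append, List.map_map]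
  congr 1
  apply List.map_congr_left
  intro i _
  simp; ring_nf

lemma win_one (p : ℕ) : win p 1 = [tmB p] := by
  unfold win
  rw [show List.range 1 = [0] from rfl]
  simp

lemma win_two (p : ℕ) : win p 2 = [tmB p, tmB (p+1)] := by
  unfold win
  rw [show List.range 2 = [0, 1] from rfl]
  simp

lemma tmMap_cons (b : Bool) (w : List Bool) : tmMap (b :: w) = b :: (!b) :: tmMap w := by
  cases b <;> simp [tmMap]

@[simp] lemma tmMap_nil : tmMap [] = [] := rfl

lemma tmMap_append (u v : List Bool) : tmMap (u ++ v) = tmMap u ++ tmMap v := by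
  simp [tmMap]

lemma tmMap_false : tmMap [false] = [false, true] := by
  rw [tmMap_cons, tmMap_nil]; rfl

lemma tmMap_length (w : List Bool) : (tmMap w).length = 2 * w.length := by
  induction w with
  | nil => simp
  | cons a w ih => rw [tmMap_cons]; simp [ih]; omega

lemma tmMap_win (p k : ℕ) : tmMap (win p k) = win (2*p) (2*k) := by
  induction k with
  | zero => simp [win, tmMap]
  | succ k ih =>
    have h1 : win p (k+1) = win p k ++ win (p+k) 1 := (win_append p k 1).symm
    have h2 : win (2*p) (2*(k+1)) = win (2*p) (2*k) ++ win (2*p+2*k) 2 := by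
      rw [win_append]; ring_nf
    rw [h1, tmMap_append, ih, h2]
    congr 1
    have e2 : win (2*p+2*k) 2 = [tmB (2*(p+k)), tmB (2*(p+k)+1)] := by
      rw [show 2*p+2*k = 2*(p+k) from by ring, win_two]
    rw [win_one, e2, tmB_even, tmB_odd]
    cases tmB (p+k) <;> simp [tmMap]

lemma theta_pow (m : ℕ) : tmMap^[m] [false] = win 0 (2^m) := by
  induction m with
  | zero =>
    have h0 : tmB 0 = false := by norm_num [tmB]
    have hw : win 0 1 = [false] := by rw [win_one, h0]
    simp only [Function.iterate_zero, id_eq, pow_zero, hw]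
  | succ m ih =>
    rw [Function.iterate_succ_apply', ih, tmMap_win]
    norm_num [pow_succ]; ring_nf

/-- Every window of the Thue–Morse word is a factor of it. -/
lemma win_factor (p k : ℕ) : FactorTM (win p k) := by
  refine ⟨p + k, ?_⟩
  rw [theta_pow]
  have h : p + k ≤ 2^(p+k) := le_of_lt (Nat.lt_two_pow_self (n := p+k))
  refine ⟨win 0 p, win (p+k) (2^(p+k) - (p+k)), ?_⟩
  have h1 : win 0 p ++ win p k = win 0 (p+k) := by
    have := win_append 0 p k; rwa [Nat.zero_add] at this
  have h2 : win 0 (p+k) ++ win (p+k) (2^(p+k) - (p+k)) = win 0 ((p+k) + (2^(p+k) - (p+k))) := by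
    have := win_append 0 (p+k) (2^(p+k) - (p+k)); rwa [Nat.zero_add] at this
  rw [h1, h2]
  congr 1
  omega

/-! ### Closure properties of the factor set -/

lemma tmMap_infix {u v : List Bool} (h : u <:+: v) : tmMap u <:+: tmMap v := by
  obtain ⟨s, t, rfl⟩ := h
  exact ⟨tmMap s, tmMap t, by rw [← tmMap_append, ← tmMap_append]⟩

lemma factor_tmMap {w : List Bool} (h : FactorTM w) : FactorTM (tmMap w) := by
  obtain ⟨m, hm⟩ := h
  exact ⟨m+1, by rw [Function.iterate_succ_apply']; exact tmMap_infix hm⟩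

lemma tmMap_map_not (w : List Bool) :
    tmMap (w.map (fun b => !b)) = (tmMap w).map (fun b => !b) := by
  induction w with
  | nil => simp
  | cons a w ih => simp [tmMap_cons, ih]

lemma tmMap_reverse (w : List Bool) :
    (tmMap w).reverse = tmMap ((w.map (fun b => !b)).reverse) := by
  induction w with
  | nil => simp
  | cons a w ih =>
    rw [tmMap_cons]
    simp only [List.reverse_cons, List.map_cons, tmMap_append, ← ih]
    rw [tmMap_cons, tmMap_nil]
    simp

lemma rev_theta_pow (m : ℕ) :
    (tmMap^[m] [false]).reverse = tmMap^[m] [false] ∨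
    (tmMap^[m] [false]).reverse = (tmMap^[m] [false]).map (fun b => !b) := by
  induction m with
  | zero => left; rfl
  | succ m ih =>
    rw [Function.iterate_succ_apply']
    set X := tmMap^[m] [false]
    rcases ih with h | h
    · right
      rw [tmMap_reverse, ← List.map_reverse, h, tmMap_map_not]
    · left
      rw [tmMap_reverse, ← List.map_reverse, h]
      congr 1
      simp [Function.comp_def]

lemma mapnot_theta_pow (m : ℕ) :
    (tmMap^[m] [false]).map (fun b => !b) <:+: tmMap^[m+1] [false] := by
  have h : (tmMap^[m] [false]).map (fun b => !b) = tmMap^[m] [true] := by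
    induction m with
    | zero => rfl
    | succ m ih =>
      rw [Function.iterate_succ_apply', Function.iterate_succ_apply', ← tmMap_map_not, ih]
  rw [h, Function.iterate_succ_apply]
  have hbase : [true] <:+: tmMap [false] := ⟨[false], [], by rw [tmMap_cons, tmMap_nil]; rfl⟩
  clear h
  induction m with
  | zero => exact hbase
  | succ m ih =>
    rw [Function.iterate_succ_apply', Function.iterate_succ_apply']
    exact tmMap_infix ih

lemma factor_reverse {w : List Bool} (h : FactorTM w) : FactorTM w.reverse := by
  obtain ⟨m, hm⟩ := h
  rcases rev_theta_pow m with h' | h'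
  · exact ⟨m, by rw [← h']; exact hm.reverse⟩
  · refine ⟨m+1, ?_⟩
    have h1 : w.reverse <:+: (tmMap^[m] [false]).reverse := hm.reverse
    rw [h'] at h1
    exact h1.trans (mapnot_theta_pow m)

lemma factor_mapnot {w : List Bool} (h : FactorTM w) : FactorTM (w.map (fun b => !b)) := by
  obtain ⟨m, hm⟩ := h
  refine ⟨m+1, ?_⟩
  have h1 : w.map (fun b => !b) <:+: (tmMap^[m] [false]).map (fun b => !b) := hm.map _
  exact h1.trans (mapnot_theta_pow m)

lemma tmMap_inj : Function.Injective tmMap := by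
  intro u v h
  induction u generalizing v with
  | nil =>
    cases v with
    | nil => rfl
    | cons b v => rw [tmMap_nil, tmMap_cons] at h; exact absurd h (by simp)
  | cons a u ih =>
    cases v with
    | nil => rw [tmMap_nil, tmMap_cons] at h; exact absurd h (by simp)
    | cons b v =>
      rw [tmMap_cons, tmMap_cons] at h
      injection h with h1 h'
      injection h' with h2 h3
      rw [h1, ih h3]

/-- If a window equals its own reverse then symmetric entries agree. -/
lemma win_pal_inst {p n j : ℕ} (h : win p n = (win p n).reverse) (hj : j < n) :
    tmB (p + j) = tmB (p + (n - 1 - j)) := by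
  have hj' : n - 1 - j < n := by omega
  have e1 := win_getElem p n j hj
  have e2 := win_getElem p n (n-1-j) hj'
  have key : (win p n)[j]'(by simpa using hj) =
      ((win p n).reverse)[j]'(by simpa using hj) := by
    congr 1
  rw [List.getElem_reverse] at key
  simp only [win_length] at key
  rw [e1.symm, key, e2]

/-- Helper: produce the conclusion of `stmt2` from a window of odd length `k` carrying
`01` at both ends. -/
lemma odd_case (k : ℕ) (hk : 7 ≤ k) (hodd : k % 2 = 1) (p : ℕ)
    (hA : tmB p = false) (hB : tmB (p+1) = true)
    (hC : tmB (p+k-2) = false) (hD : tmB (p+k-1) = true) :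
    ∃ x y : List Bool, x ≠ y ∧
      ([false, true] ++ x ++ [false, true]).length = k ∧
      ([false, true] ++ y ++ [false, true]).length = k ∧
      FactorTM ([false, true] ++ x ++ [false, true]) ∧
      FactorTM ([false, true] ++ y ++ [false, true]) := by
  set x : List Bool := win (p+2) (k-4) with hxdef
  have hx : x.length = k - 4 := win_length _ _
  have hw : win p k = [false, true] ++ x ++ [false, true] := by
    have d2 : win (p+2) (k-4) ++ win (p+k-2) 2 = win (p+2) (k-2) := by
      have := win_append (p+2) (k-4) 2
      rw [show p+2+(k-4) = p+k-2 from by omega, show (k-4)+2 = k-2 from by omega] at this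
      exact this
    have d1 : win p 2 ++ win (p+2) (k-2) = win p k := by
      have := win_append p 2 (k-2)
      rw [show 2+(k-2) = k from by omega] at this
      exact this
    rw [← d1, ← d2, win_two, win_two, hA, hB,
      show p+k-2+1 = p+k-1 from by omega, hC, hD]
    simp [hxdef]
  refine ⟨x, (x.map (fun b => !b)).reverse, ?_, ?_, ?_, ?_, ?_⟩
  · -- distinctness via the middle letter
    intro heq
    have hi : (k-5)/2 < x.length := by rw [hx]; omega
    have h1 : x[(k-5)/2]'hi = ((x.map (fun b => !b)).reverse)[(k-5)/2]'(by simp [hx]; omega) := by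
      simp only [← heq]
    rw [List.getElem_reverse] at h1
    simp only [List.length_map, List.getElem_map, hx] at h1
    simp only [show k-4-1-(k-5)/2 = (k-5)/2 from by omega] at h1
    simp at h1
  · simp [hx]; omega
  · simp [hx]; omega
  · rw [← hw]; exact win_factor p k
  · have hy : [false,true] ++ (x.map (fun b => !b)).reverse ++ [false,true] =
        ((win p k).map (fun b => !b)).reverse := by
      rw [hw]
      simp [List.reverse_append]
    rw [hy]
    exact factor_reverse (factor_mapnot (win_factor p k))

/-- Helper: produce the conclusion of `stmt2` (for `k = 2*l`) from a window of length
`l` starting and ending with `0` whose interior is not a palindrome. -/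
lemma even_case (k l : ℕ) (hk : 7 ≤ k) (hkl : k = 2*l) (p : ℕ)
    (hstart : tmB p = false) (hend : tmB (p+(l-1)) = false)
    (hnp : win (p+1) (l-2) ≠ (win (p+1) (l-2)).reverse) :
    ∃ x y : List Bool, x ≠ y ∧
      ([false, true] ++ x ++ [false, true]).length = k ∧
      ([false, true] ++ y ++ [false, true]).length = k ∧
      FactorTM ([false, true] ++ x ++ [false, true]) ∧
      FactorTM ([false, true] ++ y ++ [false, true]) := by
  have hl : 4 ≤ l := by omega
  set mid : List Bool := win (p+1) (l-2) with hmiddef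
  have hu : win p l = [false] ++ mid ++ [false] := by
    have d2 : win (p+1) (l-2) ++ win (p+(l-1)) 1 = win (p+1) (l-1) := by
      have := win_append (p+1) (l-2) 1
      rw [show p+1+(l-2) = p+(l-1) from by omega, show (l-2)+1 = l-1 from by omega] at this
      exact this
    have d1 : win p 1 ++ win (p+1) (l-1) = win p l := by
      have := win_append p 1 (l-1)
      rw [show 1+(l-1) = l from by omega] at this
      exact this
    rw [← d1, ← d2, win_one, win_one, hstart, hend]
    simp [hmiddef]
  have hmidlen : mid.length = l - 2 := win_length _ _
  have hrev : (win p l).reverse = [false] ++ mid.reverse ++ [false] := by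
    rw [hu]; simp
  refine ⟨tmMap mid, tmMap mid.reverse, ?_, ?_, ?_, ?_, ?_⟩
  · intro heq
    exact hnp (tmMap_inj heq)
  · simp [tmMap_length, hmidlen]; omega
  · simp [tmMap_length, hmidlen]; omega
  · have : tmMap (win p l) = [false,true] ++ tmMap mid ++ [false,true] := by
      rw [hu, tmMap_append, tmMap_append, tmMap_false]
    rw [← this]
    exact factor_tmMap (win_factor p l)
  · have : tmMap ((win p l).reverse) = [false,true] ++ tmMap mid.reverse ++ [false,true] := by
      rw [hrev, tmMap_append, tmMap_append, tmMap_false]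
    rw [← this]
    exact factor_tmMap (factor_reverse (win_factor p l))

theorem stmt2 (k : ℕ) (hk : 7 ≤ k) :
    ∃ x y : List Bool, x ≠ y ∧
      ([false, true] ++ x ++ [false, true]).length = k ∧
      ([false, true] ++ y ++ [false, true]).length = k ∧
      FactorTM ([false, true] ++ x ++ [false, true]) ∧
      FactorTM ([false, true] ++ y ++ [false, true]) := by
  rcases Nat.even_or_odd k with ⟨l, hl⟩ | ⟨K, hK⟩
  · -- even case : k = 2*l, l ≥ 4
    have hkl : k = 2*l := by omega
    have hl4 : 4 ≤ l := by omega
    rcases Nat.even_or_odd l with ⟨L, hLl⟩ | ⟨L, hLl⟩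
    · -- l = 2*L even
      have hlL : l = 2*L := by omega
      have hL2 : 2 ≤ L := by omega
      rcases Nat.even_or_odd L with ⟨M, hM⟩ | ⟨M, hM⟩
      · -- (c) L = 2*M even, use R'(L), start at odd position
        have hLM : L = 2*M := by omega
        obtain ⟨α, h0, h1⟩ := (QRR L).2.2 (by omega)
        refine even_case k l hk hkl (2*α+1) (by rw [tmB_odd, h0]; rfl) ?_ ?_
        · rw [show 2*α+1+(l-1) = 2*(α+L) from by omega, tmB_even]; exact h1
        · intro hpal
          have inst := win_pal_inst hpal (j := L-2) (by omega)
          rw [show 2*α+1+1+(L-2) = 2*(α+M) from by omega,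
            show 2*α+1+1+((l-2)-1-(L-2)) = 2*(α+M)+1 from by omega,
            tmB_even, tmB_odd] at inst
          simp at inst
      · -- (b) L = 2*M+1 odd ≥ 3, use R(L-1), start at even position
        have hLM : L = 2*M+1 := by omega
        have hM1 : 1 ≤ M := by omega
        obtain ⟨α, h0, h1⟩ := (QRR (L-1)).2.1 (by omega)
        refine even_case k l hk hkl (2*α) (by rwa [tmB_even]) ?_ ?_
        · rw [show 2*α+(l-1) = 2*(α+(L-1))+1 from by omega, tmB_odd, h1]; rfl
        · intro hpal
          have inst := win_pal_inst hpal (j := L-2) (by omega)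
          rw [show 2*α+1+(L-2) = 2*(α+M) from by omega,
            show 2*α+1+((l-2)-1-(L-2)) = 2*(α+M)+1 from by omega,
            tmB_even, tmB_odd] at inst
          simp at inst
    · -- (a) l = 2*L+1 odd ≥ 5, L ≥ 2, use lemY L
      have hlL : l = 2*L+1 := by omega
      have hL2 : 2 ≤ L := by omega
      obtain ⟨α, h0, h1, hL⟩ := lemY L hL2
      refine even_case k l hk hkl (2*α) (by rwa [tmB_even]) ?_ ?_
      · rw [show 2*α+(l-1) = 2*(α+L) from by omega, tmB_even]; exact hL
      · intro hpal
        have inst1 := win_pal_inst hpal (j := 1) (by omega)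
        have inst0 := win_pal_inst hpal (j := 0) (by omega)
        rw [show 2*α+1+1 = 2*(α+1) from by omega,
          show 2*α+1+((l-2)-1-1) = 2*(α+(L-1)) from by omega,
          tmB_even, tmB_even, h1] at inst1
        rw [show 2*α+1+0 = 2*α+1 from by omega,
          show 2*α+1+((l-2)-1-0) = 2*(α+(L-1))+1 from by omega,
          tmB_odd, tmB_odd, h0, ← inst1] at inst0
        simp at inst0
  · -- odd case : k = 2*K+1, K ≥ 3
    have hK3 : 3 ≤ K := by omega
    have hex : ∃ c, tmB c = false ∧ tmB (c+1) = true ∧ tmB (2*c+K+1) = false := by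
      rcases Nat.even_or_odd K with ⟨h', hh⟩ | ⟨g', hh⟩
      · -- K even, K = 2*h', h' ≥ 2 : lemX h'
        obtain ⟨c, hc0, hc1, hc2⟩ := lemX h' (by omega)
        refine ⟨c, hc0, hc1, ?_⟩
        rw [show 2*c+K+1 = 2*(c+h')+1 from by omega, tmB_odd, hc2]; rfl
      · -- K odd, K = 2*g'+1, use lemY (g'+1)
        obtain ⟨c, hc0, hc1, hc2⟩ := lemY (g'+1) (by omega)
        refine ⟨c, hc0, hc1, ?_⟩
        rw [show 2*c+K+1 = 2*(c+(g'+1)) from by omega, tmB_even]; exact hc2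
    obtain ⟨c, hc0, hc1, hend⟩ := hex
    refine odd_case k hk (by omega) (4*c+3) ?_ ?_ ?_ ?_
    · rw [show 4*c+3 = 2*(2*c+1)+1 from by omega, tmB_odd, tmB_odd, hc0]; rfl
    · rw [show 4*c+3+1 = 2*(2*(c+1)) from by omega, tmB_even, tmB_even]; exact hc1
    · rw [show 4*c+3+k-2 = 2*(2*c+K+1) from by omega, tmB_even]; exact hend
    · rw [show 4*c+3+k-1 = 2*(2*c+K+1)+1 from by omega, tmB_odd, hend]; rfl
end

section
/- For every integer k ≥ 7, the Thue–Morse word t contains two distinct factors of length k each of which has 01 as a prefix and 10 as a suffix (i.e., two distinct factors of the form 01x10). -/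
/-- fueled Thue-Morse bit -/
def tmF : ℕ → ℕ → Bool
  | _, 0 => false
  | 0, _+1 => true
  | f+1, n+1 => if (n+1) % 2 = 1 then !(tmF f ((n+1)/2)) else tmF f ((n+1)/2)

def tm (n : ℕ) : Bool := tmF n n

lemma tmF_congr : ∀ n f f', n ≤ f → n ≤ f' → tmF f n = tmF f' n := by
  intro n
  induction n using Nat.strong_induction_on with
  | _ n ih =>
    intro f f' hf hf'
    match n, f, f', hf, hf' with
    | 0, f, f', _, _ => cases f <;> cases f' <;> rfl
    | n+1, f+1, f'+1, hf, hf' =>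
      simp only [tmF]
      have h2 : (n+1)/2 < n+1 := by omega
      rw [ih ((n+1)/2) h2 f ((n+1)/2) (by omega) (by omega),
          ih ((n+1)/2) h2 f' ((n+1)/2) (by omega) (by omega)]

lemma tm_two_mul (n : ℕ) : tm (2*n) = tm n := by
  cases n with
  | zero => rfl
  | succ m =>
    show tmF (2*(m+1)) (2*(m+1)) = tm (m+1)
    have : 2*(m+1) = (2*m+1)+1 := by omega
    rw [this]
    show tmF ((2*m+1)+1) ((2*m+1)+1) = tm (m+1)
    simp only [tmF]
    have h1 : (2*m+1+1) % 2 = 0 := by omega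
    have h2 : (2*m+1+1)/2 = m+1 := by omega
    rw [if_neg (by omega : ¬ (2*m+1+1) % 2 = 1), h2]
    exact tmF_congr (m+1) (2*m+1) (m+1) (by omega) le_rfl

lemma tm_two_mul_add_one (n : ℕ) : tm (2*n+1) = !tm n := by
  show tmF (2*n+1) (2*n+1) = !tm n
  cases h : 2*n+1 with
  | zero => omega
  | succ k =>
    have hk : k = 2*n := by omega
    subst hk
    simp only [tmF]
    have h1 : (2*n+1) % 2 = 1 := by omega
    have h2 : (2*n+1)/2 = n := by omega
    rw [if_pos h1, h2, tmF_congr n (2*n) n (by omega) le_rfl]; rfl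

example : tm 0 = false ∧ tm 1 = true ∧ tm 2 = true ∧ tm 3 = false ∧ tm 4 = true ∧ tm 5 = false ∧ tm 6 = false ∧ tm 7 = true := by decide

/-- pair occurrence lemma -/
lemma tm_pair : ∀ e, 1 ≤ e → ∀ a b : Bool, ∃ m, tm m = a ∧ tm (m+e) = b := by
  intro e
  induction e using Nat.strong_induction_on with
  | _ e ih =>
    intro he a b
    rcases Nat.lt_or_ge e 2 with h2 | h2
    · -- e = 1
      have : e = 1 := by omega
      subst this
      cases a <;> cases b
      · exact ⟨5, by decide⟩
      · exact ⟨0, by decide⟩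
      · exact ⟨2, by decide⟩
      · exact ⟨1, by decide⟩
    · rcases Nat.even_or_odd e with ⟨f, hf⟩ | ⟨f, hf⟩
      · obtain ⟨m, h1, h2⟩ := ih f (by omega) (by omega) a b
        refine ⟨2*m, by rw [tm_two_mul]; exact h1, ?_⟩
        have : 2*m + e = 2*(m+f) := by omega
        rw [this, tm_two_mul]; exact h2
      · obtain ⟨m, h1, h2⟩ := ih f (by omega) (by omega) a (!b)
        refine ⟨2*m, by rw [tm_two_mul]; exact h1, ?_⟩
        have : 2*m + e = 2*(m+f)+1 := by omega
        rw [this, tm_two_mul_add_one, h2, Bool.not_not]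

/-- forward triple, a ≠ b class -/
lemma tm_Qneq : ∀ g, 2 ≤ g → ∀ a c : Bool,
    ∃ m, tm m = a ∧ tm (m+1) = !a ∧ tm (m+g) = c := by
  intro g hg a c
  rcases Nat.even_or_odd g with ⟨h, hh⟩ | ⟨h, hh⟩
  · obtain ⟨m, h1, h2⟩ := tm_pair h (by omega) a c
    refine ⟨2*m, by rw [tm_two_mul]; exact h1,
      by rw [tm_two_mul_add_one, h1], ?_⟩
    have : 2*m + g = 2*(m+h) := by omega
    rw [this, tm_two_mul]; exact h2
  · obtain ⟨m, h1, h2⟩ := tm_pair h (by omega) a (!c)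
    refine ⟨2*m, by rw [tm_two_mul]; exact h1,
      by rw [tm_two_mul_add_one, h1], ?_⟩
    have : 2*m + g = 2*(m+h)+1 := by omega
    rw [this, tm_two_mul_add_one, h2, Bool.not_not]

/-- forward triple, a = b class -/
lemma tm_Qeq : ∀ g, 3 ≤ g → ∀ a c : Bool,
    ∃ m, tm m = a ∧ tm (m+1) = a ∧ tm (m+g) = c := by
  intro g hg a c
  rcases Nat.even_or_odd g with ⟨h, hh⟩ | ⟨h, hh⟩
  · obtain ⟨m, h1, h2, h3⟩ := tm_Qneq h (by omega) (!a) (!c)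
    rw [Bool.not_not] at h2
    refine ⟨2*m+1, by rw [tm_two_mul_add_one, h1, Bool.not_not], ?_, ?_⟩
    · have : 2*m+1+1 = 2*(m+1) := by omega
      rw [this, tm_two_mul]; exact h2
    · have : 2*m+1+g = 2*(m+h)+1 := by omega
      rw [this, tm_two_mul_add_one, h3, Bool.not_not]
  · obtain ⟨m, h1, h2, h3⟩ := tm_Qneq (h+1) (by omega) (!a) c
    rw [Bool.not_not] at h2
    refine ⟨2*m+1, by rw [tm_two_mul_add_one, h1, Bool.not_not], ?_, ?_⟩
    · have : 2*m+1+1 = 2*(m+1) := by omega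
      rw [this, tm_two_mul]; exact h2
    · have : 2*m+1+g = 2*(m+(h+1)) := by omega
      rw [this, tm_two_mul]; exact h3

/-- reverse triple, b ≠ c class -/
lemma tm_Rneq : ∀ g, 1 ≤ g → ∀ a b : Bool,
    ∃ m, tm m = a ∧ tm (m+g) = b ∧ tm (m+g+1) = !b := by
  intro g hg a b
  rcases Nat.even_or_odd g with ⟨h, hh⟩ | ⟨h, hh⟩
  · obtain ⟨m, h1, h2⟩ := tm_pair h (by omega) a b
    refine ⟨2*m, by rw [tm_two_mul]; exact h1, ?_, ?_⟩
    · have : 2*m + g = 2*(m+h) := by omega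
      rw [this, tm_two_mul]; exact h2
    · have : 2*m + g + 1 = 2*(m+h)+1 := by omega
      rw [this, tm_two_mul_add_one, h2]
  · obtain ⟨m, h1, h2⟩ := tm_pair (h+1) (by omega) (!a) b
    refine ⟨2*m+1, by rw [tm_two_mul_add_one, h1, Bool.not_not], ?_, ?_⟩
    · have : 2*m+1+g = 2*(m+(h+1)) := by omega
      rw [this, tm_two_mul]; exact h2
    · have : 2*m+1+g+1 = 2*(m+(h+1))+1 := by omega
      rw [this, tm_two_mul_add_one, h2]

/-- reverse triple, b = c class -/
lemma tm_Req : ∀ g, 2 ≤ g → ∀ a b : Bool,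
    ∃ m, tm m = a ∧ tm (m+g) = b ∧ tm (m+g+1) = b := by
  intro g hg a b
  rcases Nat.even_or_odd g with ⟨h, hh⟩ | ⟨h, hh⟩
  · obtain ⟨m, h1, h2, h3⟩ := tm_Rneq h (by omega) (!a) (!b)
    rw [Bool.not_not] at h3
    refine ⟨2*m+1, by rw [tm_two_mul_add_one, h1, Bool.not_not], ?_, ?_⟩
    · have : 2*m+1+g = 2*(m+h)+1 := by omega
      rw [this, tm_two_mul_add_one, h2, Bool.not_not]
    · have : 2*m+1+g+1 = 2*(m+h+1) := by omega
      rw [this, tm_two_mul]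
      have : m+h+1 = m+h+1 := rfl
      exact h3
  · obtain ⟨m, h1, h2, h3⟩ := tm_Rneq h (by omega) a (!b)
    rw [Bool.not_not] at h3
    refine ⟨2*m, by rw [tm_two_mul]; exact h1, ?_, ?_⟩
    · have : 2*m+g = 2*(m+h)+1 := by omega
      rw [this, tm_two_mul_add_one, h2, Bool.not_not]
    · have : 2*m+g+1 = 2*(m+h+1) := by omega
      rw [this, tm_two_mul]
      exact h3

/-- no three consecutive equal letters (instance needed) -/
lemma tm_no_111 (m : ℕ) (h1 : tm m = true) (h2 : tm (m+1) = true) :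
    tm (m+2) = false := by
  rcases Nat.even_or_odd m with ⟨j, hj⟩ | ⟨j, hj⟩
  · exfalso
    subst hj
    rw [(by omega : j+j = 2*j), tm_two_mul] at h1
    rw [(by omega : j+j+1 = 2*j+1), tm_two_mul_add_one, h1] at h2
    simp at h2
  · subst hj
    rw [(by omega : 2*j+1+1 = 2*(j+1)), tm_two_mul] at h2
    rw [(by omega : 2*j+1+2 = 2*(j+1)+1), tm_two_mul_add_one, h2]
    rfl

def tmWord (i k : ℕ) : List Bool := (List.range' i k).map tm

lemma tmMap_single (b : Bool) : tmMap [b] = [b, !b] := by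
  cases b <;> rfl

lemma tmMap_map_range (n : ℕ) :
    tmMap ((List.range n).map tm) = (List.range (2*n)).map tm := by
  induction n with
  | zero => rfl
  | succ n ih =>
    rw [List.range_succ, List.map_append]
    show ((List.range n).map tm ++ [tm n]).flatMap _ = _
    rw [List.flatMap_append]
    have h2 : 2*(n+1) = (2*n+1)+1 := by omega
    rw [h2, List.range_succ, List.range_succ, List.map_append, List.map_append]
    show tmMap _ ++ tmMap [tm n] = _
    rw [ih, tmMap_single, List.append_assoc]
    congr 1
    have e1 : tm (2*n) = tm n := tm_two_mul n
    have e2 : tm (2*n+1) = !tm n := tm_two_mul_add_one n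
    simp [e1, e2]

lemma tmMap_iter (m : ℕ) : tmMap^[m] [false] = (List.range (2^m)).map tm := by
  induction m with
  | zero => rfl
  | succ m ih =>
    rw [Function.iterate_succ_apply', ih, tmMap_map_range, pow_succ, Nat.mul_comm]

lemma tmWord_factor (i k : ℕ) : FactorTM (tmWord i k) := by
  refine ⟨i+k, ?_⟩
  rw [tmMap_iter]
  apply List.IsInfix.map
  have h1 : List.range' i k <:+: List.range (i+k) := by
    refine ⟨List.range' 0 i, [], ?_⟩
    rw [List.append_nil, List.range_eq_range']
    have := List.range'_append (s := 0) (m := i) (n := k) (step := 1)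
    simpa using this
  apply h1.trans
  apply List.IsPrefix.isInfix
  have hle : i + k ≤ 2^(i+k) := le_of_lt (Nat.lt_two_pow_self)
  have := List.take_range (i := i+k) (n := 2^(i+k))
  rw [min_eq_left hle] at this
  exact this ▸ List.take_prefix _ _

lemma tmWord_split (i k' : ℕ) :
    tmWord i (k'+4) =
      [tm i, tm (i+1)] ++ tmWord (i+2) k' ++ [tm (i+2+k'), tm (i+3+k')] := by
  have h1 : List.range' i 2 ++ List.range' (i+2) k' = List.range' i (k'+2) := by
    have := List.range'_append (s := i) (m := 2) (n := k') (step := 1)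
    simpa [Nat.add_comm] using this
  have h2 := List.range'_append (s := i) (m := k'+2) (n := 2) (step := 1)
  rw [(by omega : i + 1*(k'+2) = i+2+k'), (by omega : k'+2+2 = k'+4)] at h2
  unfold tmWord
  rw [← h2, ← h1]
  have e : i+2+k'+1 = i+3+k' := by omega
  rw [List.map_append, List.map_append,
    show (List.range' i 2).map tm = [tm i, tm (i+1)] from rfl,
    show (List.range' (i+2+k') 2).map tm = [tm (i+2+k'), tm (i+2+k'+1)] from rfl, e]

lemma tmWord_getElem (i k j : ℕ) (hj : j < k) :
    (tmWord i k)[j]'(by simp [tmWord, hj]) = tm (i+j) := by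
  simp [tmWord, List.getElem_range']

lemma tmWord_length (i k : ℕ) : (tmWord i k).length = k := by
  simp [tmWord]

lemma frame_eq (i k' : ℕ) (h0 : tm i = false) (h1 : tm (i+1) = true)
    (h2 : tm (i+2+k') = true) (h3 : tm (i+3+k') = false) :
    tmWord i (k'+4) = [false, true] ++ tmWord (i+2) k' ++ [true, false] := by
  rw [tmWord_split, h0, h1, h2, h3]

lemma tmWord_eq_elem (i1 i2 k j : ℕ) (hj : j < k)
    (heq : tmWord i1 k = tmWord i2 k) : tm (i1+j) = tm (i2+j) := by
  rw [← tmWord_getElem i1 k j hj, ← tmWord_getElem i2 k j hj]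
  exact List.getElem_of_eq heq _

theorem stmt3 (k : ℕ) (hk : 7 ≤ k) :
    ∃ x y : List Bool, x ≠ y ∧
      ([false, true] ++ x ++ [true, false]).length = k ∧
      ([false, true] ++ y ++ [true, false]).length = k ∧
      FactorTM ([false, true] ++ x ++ [true, false]) ∧
      FactorTM ([false, true] ++ y ++ [true, false]) := by
  rcases Nat.even_or_odd k with ⟨l, hl⟩ | ⟨l, hl⟩
  · -- even case : k = 2*h + 4, h ≥ 2
    obtain ⟨h, hh, hk4⟩ : ∃ h, 2 ≤ h ∧ k = 2*h + 4 := ⟨(k-4)/2, by omega, by omega⟩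
    obtain ⟨m₁, a0, a1, a2⟩ := tm_Qeq (h+1) (by omega) false true
    obtain ⟨m₂, b0, b1, b2⟩ := tm_Qneq (h+1) (by omega) false true
    rw [show (!false : Bool) = true from rfl] at b1
    have F1 : tmWord (2*m₁) (2*h+4) =
        [false, true] ++ tmWord (2*m₁+2) (2*h) ++ [true, false] := by
      apply frame_eq
      · rw [tm_two_mul]; exact a0
      · rw [tm_two_mul_add_one, a0]; rfl
      · rw [show 2*m₁+2+2*h = 2*(m₁+(h+1)) from by omega, tm_two_mul]; exact a2
      · rw [show 2*m₁+3+2*h = 2*(m₁+(h+1))+1 from by omega, tm_two_mul_add_one, a2]; rfl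
    have F2 : tmWord (2*m₂) (2*h+4) =
        [false, true] ++ tmWord (2*m₂+2) (2*h) ++ [true, false] := by
      apply frame_eq
      · rw [tm_two_mul]; exact b0
      · rw [tm_two_mul_add_one, b0]; rfl
      · rw [show 2*m₂+2+2*h = 2*(m₂+(h+1)) from by omega, tm_two_mul]; exact b2
      · rw [show 2*m₂+3+2*h = 2*(m₂+(h+1))+1 from by omega, tm_two_mul_add_one, b2]; rfl
    refine ⟨tmWord (2*m₁+2) (2*h), tmWord (2*m₂+2) (2*h), ?_, ?_, ?_, ?_, ?_⟩
    · intro heq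
      have := tmWord_eq_elem _ _ (2*h) 0 (by omega) heq
      rw [show 2*m₁+2+0 = 2*(m₁+1) from by omega,
          show 2*m₂+2+0 = 2*(m₂+1) from by omega, tm_two_mul, tm_two_mul] at this
      rw [a1, b1] at this
      exact Bool.false_ne_true this
    · simp [tmWord_length]; omega
    · simp [tmWord_length]; omega
    · rw [← F1, show 2*h+4 = k from by omega] at *
      rw [← F1]; exact tmWord_factor _ _
    · rw [← F2]; exact tmWord_factor _ _
  · -- odd case : k = 2*j + 7
    obtain ⟨j, hk4⟩ : ∃ j, k = 2*j + 7 := ⟨(k-7)/2, by omega⟩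
    obtain ⟨m₁, a0, a1, a2⟩ := tm_Req (j+2) (by omega) false false
    obtain ⟨m₂, b0, b1, b2⟩ := tm_Qeq (j+3) (by omega) true true
    have F1 : tmWord (2*m₁) (2*j+3+4) =
        [false, true] ++ tmWord (2*m₁+2) (2*j+3) ++ [true, false] := by
      apply frame_eq
      · rw [tm_two_mul]; exact a0
      · rw [tm_two_mul_add_one, a0]; rfl
      · rw [show 2*m₁+2+(2*j+3) = 2*(m₁+(j+2))+1 from by omega, tm_two_mul_add_one, a1]; rfl
      · rw [show 2*m₁+3+(2*j+3) = 2*(m₁+(j+2)+1) from by omega, tm_two_mul]; exact a2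
    have F2 : tmWord (2*m₂+1) (2*j+3+4) =
        [false, true] ++ tmWord (2*m₂+3) (2*j+3) ++ [true, false] := by
      have := frame_eq (2*m₂+1) (2*j+3)
        (by rw [tm_two_mul_add_one, b0]; rfl)
        (by rw [show 2*m₂+1+1 = 2*(m₂+1) from by omega, tm_two_mul]; exact b1)
        (by rw [show 2*m₂+1+2+(2*j+3) = 2*(m₂+(j+3)) from by omega, tm_two_mul]; exact b2)
        (by rw [show 2*m₂+1+3+(2*j+3) = 2*(m₂+(j+3))+1 from by omega, tm_two_mul_add_one, b2]; rfl)
      rw [this, show 2*m₂+1+2 = 2*m₂+3 from by omega]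
    refine ⟨tmWord (2*m₁+2) (2*j+3), tmWord (2*m₂+3) (2*j+3), ?_, ?_, ?_, ?_, ?_⟩
    · intro heq
      have e0 := tmWord_eq_elem _ _ (2*j+3) 0 (by omega) heq
      have e1 := tmWord_eq_elem _ _ (2*j+3) 1 (by omega) heq
      rw [show 2*m₁+2+0 = 2*(m₁+1) from by omega, tm_two_mul,
          show 2*m₂+3+0 = 2*(m₂+1)+1 from by omega, tm_two_mul_add_one, b1] at e0
      have hm2 : tm (m₂+2) = false := tm_no_111 m₂ b0 b1
      rw [show 2*m₁+2+1 = 2*(m₁+1)+1 from by omega, tm_two_mul_add_one,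
          show 2*m₂+3+1 = 2*(m₂+2) from by omega, tm_two_mul, hm2] at e1
      rw [e0] at e1
      simp at e1
    · simp [tmWord_length]; omega
    · simp [tmWord_length]; omega
    · rw [← F1]; exact tmWord_factor _ _
    · rw [← F2]; exact tmWord_factor _ _
end

section
/- The 3-uniform binary morphism φ₃ defined by φ₃(0) = 001 and φ₃(1) = 011 is cubefree: φ₃(w) is cubefree for every cubefree binary word w. -/
private lemma len3 (w : List Bool) :
    (w.flatMap (fun b => [false, b, true])).length = 3 * w.length := by
  induction w with
  | nil => simp
  | cons b t ih =>
    simp only [List.flatMap_cons, List.length_append, ih, List.length_cons, List.length_nil]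
    omega

private lemma getFlat (w : List Bool) (j : ℕ) (hj : j < 3 * w.length) :
    (w.flatMap (fun b => [false, b, true]))[j]! =
      if j % 3 = 0 then false else if j % 3 = 2 then true else w[j / 3]! := by
  induction w generalizing j with
  | nil => simp at hj
  | cons b t ih =>
    rw [List.flatMap_cons]
    by_cases h3 : j < 3
    · interval_cases j <;> simp
    · have hj' : j - 3 < 3 * t.length := by simp only [List.length_cons] at hj; omega
      have hlen : (t.flatMap (fun b => [false, b, true])).length = 3 * t.length := len3 t
      have hstep : ([false, b, true] ++ t.flatMap (fun b => [false, b, true]))[j]!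
          = (t.flatMap (fun b => [false, b, true]))[j - 3]! := by
        rw [getElem!_pos _ j (by simp only [List.length_append, List.length_cons,
              List.length_nil, hlen]; omega),
          getElem!_pos _ (j - 3) (by omega),
          List.getElem_append_right (by simp; omega)]
        simp
      rw [hstep, ih _ hj']
      have e1 : (j - 3) % 3 = j % 3 := by omega
      have e2 : j / 3 = (j - 3) / 3 + 1 := by omega
      rw [e1, e2]
      split_ifs <;> simp [List.getElem!_cons_succ]

theorem stmt8 :
    CubefreeMorphism (fun b =>
      if b then [false, true, true] else [false, false, true]) := by
  have hfun : (fun b : Bool => if b then [false, true, true] else [false, false, true])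
      = (fun b : Bool => [false, b, true]) := by
    funext b; cases b <;> rfl
  rw [hfun]
  intro w hw x hx hinf
  obtain ⟨pre, suf, hsplit⟩ := hinf
  set u := w.flatMap (fun b => [false, b, true]) with hu_def
  set p := x.length with hp_def
  have hp1 : 1 ≤ p := List.length_pos_iff.mpr hx
  set s := pre.length with hs_def
  have hulen : u.length = 3 * w.length := len3 w
  have hxxl : (x ++ x ++ x).length = 3 * p := by
    simp only [List.length_append, hp_def]; ring
  have hlen : s + 3 * p + suf.length = 3 * w.length := by
    have h := congrArg List.length hsplit
    simp only [List.length_append] at h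
    omega
  have hu0 : ∀ i, i < 3 * w.length → i % 3 = 0 → u[i]! = false := by
    intro i h1 h2; rw [getFlat w i h1]; simp [h2]
  have hu2 : ∀ i, i < 3 * w.length → i % 3 = 2 → u[i]! = true := by
    intro i h1 h2; rw [getFlat w i h1]; simp [h2]
  have hu1 : ∀ i, i < 3 * w.length → i % 3 = 1 → u[i]! = w[i / 3]! := by
    intro i h1 h2; rw [getFlat w i h1]; simp [h2]
  -- u agrees with x ++ x ++ x shifted by s
  have hx3 : ∀ j, j < 3 * p → u[s + j]! = (x ++ x ++ x)[j]! := by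
    intro j hj
    rw [← hsplit]
    rw [getElem!_pos _ (s + j) (by simp only [List.length_append]; omega),
      getElem!_pos _ j (by omega)]
    rw [List.getElem_append_left (h := by simp only [List.length_append]; omega),
      List.getElem_append_right (by omega)]
    congr 1
    omega
  -- periodicity of the cube
  have hxper : ∀ j, j < 2 * p → (x ++ x ++ x)[j]! = (x ++ x ++ x)[j + p]! := by
    intro j hj
    have h2l : (x ++ x).length = 2 * p := by simp only [List.length_append, hp_def]; ring
    conv_rhs => rw [List.append_assoc]
    rw [getElem!_pos _ j (by simp only [List.length_append]; omega),
      getElem!_pos _ (j + p) (by simp only [List.length_append]; omega)]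
    rw [List.getElem_append_left (as := x ++ x) (bs := x)
        (h := by simp only [List.length_append]; omega),
      List.getElem_append_right (as := x) (bs := x ++ x) (by omega)]
    congr 1
    omega
  have hper : ∀ j, j < 2 * p → u[s + j]! = u[s + j + p]! := by
    intro j hj
    rw [hx3 j (by omega), show s + j + p = s + (j + p) by ring, hx3 (j + p) (by omega)]
    exact hxper j hj
  by_cases hq : p % 3 = 0
  · -- p = 3q : find a cube in w
    set q := p / 3 with hq_def
    have hq1 : 1 ≤ q := by omega
    set i0 := (s + 1) / 3 with hi0_def
    have hi0a : s ≤ 3 * i0 + 1 := by omega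
    have hi0b : 3 * i0 + 1 ≤ s + 2 := by omega
    have hwlen : i0 + 3 * q ≤ w.length := by omega
    have hstep : ∀ i, i0 ≤ i → i < i0 + 2 * q → w[i]! = w[i + q]! := by
      intro i h1 h2
      have h := hper (3 * i + 1 - s) (by omega)
      rw [show s + (3 * i + 1 - s) = 3 * i + 1 by omega] at h
      rw [show 3 * i + 1 + p = 3 * (i + q) + 1 by omega] at h
      rw [hu1 _ (by omega) (by omega), hu1 _ (by omega) (by omega)] at h
      rw [show (3 * i + 1) / 3 = i by omega, show (3 * (i + q) + 1) / 3 = i + q by omega] at h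
      exact h
    set y := (w.drop i0).take q with hy_def
    have hylen : y.length = q := by
      rw [hy_def]; simp only [List.length_take, List.length_drop]; omega
    have hwi : ∀ k, k < 3 * q → ((w.drop i0).take (3 * q))[k]! = w[i0 + k]! := by
      intro k hk
      rw [getElem!_pos _ k (by simp only [List.length_take, List.length_drop]; omega),
        getElem!_pos _ (i0 + k) (by omega), List.getElem_take, List.getElem_drop]
    have hyk : ∀ m, m < q → y[m]! = w[i0 + m]! := by
      intro m hm
      rw [hy_def]
      rw [getElem!_pos _ m (by simp only [List.length_take, List.length_drop]; omega),
        getElem!_pos _ (i0 + m) (by omega), List.getElem_take, List.getElem_drop]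
    have hylen3 : (y ++ y ++ y).length = 3 * q := by
      simp only [List.length_append, hylen]; ring
    have hseg : (w.drop i0).take (3 * q) = y ++ y ++ y := by
      apply List.ext_getElem!
      · simp only [List.length_take, List.length_drop, hylen3]; omega
      · intro k
        by_cases hk3 : k < 3 * q
        · rw [hwi k hk3]
          have hylen2 : (y ++ y).length = 2 * q := by simp only [List.length_append, hylen]; omega
          rcases (show k < q ∨ (q ≤ k ∧ k < 2 * q) ∨ 2 * q ≤ k by omega) with h | h | h
          · rw [getElem!_pos _ k (by omega), List.getElem_append_left (h := by omega),
              List.getElem_append_left (h := by omega), ← getElem!_pos, hyk k h]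
          · rw [getElem!_pos _ k (by omega), List.getElem_append_left (h := by omega),
              List.getElem_append_right (by omega), ← getElem!_pos, hylen,
              hyk (k - q) (by omega), show i0 + (k - q) = i0 + k - q by omega,
              hstep (i0 + k - q) (by omega) (by omega),
              show i0 + k - q + q = i0 + k by omega]
          · rw [getElem!_pos _ k (by omega), List.getElem_append_right (by omega),
              ← getElem!_pos, hylen2, hyk (k - 2 * q) (by omega),
              show i0 + (k - 2 * q) = i0 + k - 2 * q by omega,
              hstep (i0 + k - 2 * q) (by omega) (by omega),
              show i0 + k - 2 * q + q = i0 + k - q by omega,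
              hstep (i0 + k - q) (by omega) (by omega),
              show i0 + k - q + q = i0 + k by omega]
        · rw [getElem!_neg _ k (by simp only [List.length_take, List.length_drop]; omega),
            getElem!_neg _ k (by omega)]
    have hyne : y ≠ [] := by
      intro h; rw [h] at hylen; simp at hylen; omega
    refine hw y hyne ⟨w.take i0, w.drop (i0 + 3 * q), ?_⟩
    rw [← hseg]
    rw [show w.drop (i0 + 3 * q) = (w.drop i0).drop (3 * q) by rw [List.drop_drop]]
    rw [List.append_assoc, List.take_append_drop, List.take_append_drop]
  · -- 3 ∤ p : contradiction from letter positions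
    have E1 : u[s]! = u[s + p]! := by
      have h := hper 0 (by omega); rwa [Nat.add_zero] at h
    have E2 : u[s + p]! = u[s + 2 * p]! := by
      have h := hper p (by omega); rwa [show s + p + p = s + 2 * p by ring] at h
    have hall : ∀ c, (c = s ∨ c = s + p ∨ c = s + 2 * p) → u[c]! = u[s]! := by
      rintro c (rfl | rfl | rfl)
      · rfl
      · exact E1.symm
      · exact (E1.trans E2).symm
    have key : ∀ a b : ℕ, (a = s ∨ a = s + p ∨ a = s + 2 * p) →
        (b = s ∨ b = s + p ∨ b = s + 2 * p) → a % 3 = 0 → b % 3 = 2 → False := by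
      intro a b hma hmb ha hb
      have hba : a < 3 * w.length := by rcases hma with rfl | rfl | rfl <;> omega
      have hbb : b < 3 * w.length := by rcases hmb with rfl | rfl | rfl <;> omega
      have va : u[a]! = false := hu0 a hba ha
      have vb : u[b]! = true := hu2 b hbb hb
      rw [hall a hma] at va
      rw [hall b hmb] at vb
      rw [va] at vb
      exact Bool.false_ne_true vb
    rcases (show s % 3 = 0 ∨ s % 3 = 1 ∨ s % 3 = 2 by omega) with h | h | h <;>
      rcases (show p % 3 = 1 ∨ p % 3 = 2 by omega) with h' | h'
    · exact key s (s + 2 * p) (Or.inl rfl) (Or.inr (Or.inr rfl)) (by omega) (by omega)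
    · exact key s (s + p) (Or.inl rfl) (Or.inr (Or.inl rfl)) (by omega) (by omega)
    · exact key (s + 2 * p) (s + p) (Or.inr (Or.inr rfl)) (Or.inr (Or.inl rfl)) (by omega) (by omega)
    · exact key (s + p) (s + 2 * p) (Or.inr (Or.inl rfl)) (Or.inr (Or.inr rfl)) (by omega) (by omega)
    · exact key (s + p) s (Or.inr (Or.inl rfl)) (Or.inl rfl) (by omega) (by omega)
    · exact key (s + 2 * p) s (Or.inr (Or.inr rfl)) (Or.inl rfl) (by omega) (by omega)
end

section
/- The 11-uniform binary morphism φ₁₁ defined by φ₁₁(0) = 00101001011 and φ₁₁(1) = 00101001101 is cubefree: φ₁₁(w) is cubefree for every cubefree binary word w. -/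
namespace CF11

def hph : Bool → List Bool := fun b =>
  if b then [false, false, true, false, true, false, false, true, true, false, true]
  else [false, false, true, false, true, false, false, true, false, true, true]

def Hph (w : List Bool) : List Bool := w.flatMap hph

def Pph : List Bool := [false, false, true, false, true, false, false, true]

lemma hlen (b : Bool) : (hph b).length = 11 := by cases b <;> rfl

lemma H_nil : Hph [] = [] := rfl

lemma H_cons (a : Bool) (w : List Bool) : Hph (a :: w) = hph a ++ Hph w := by
  simp [Hph]

lemma H_append (v₁ v₂ : List Bool) : Hph (v₁ ++ v₂) = Hph v₁ ++ Hph v₂ := by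
  simp [Hph]

lemma Hlen (w : List Bool) : (Hph w).length = 11 * w.length := by
  induction w with
  | nil => rfl
  | cons a w ih => rw [H_cons, List.length_append, hlen, ih, List.length_cons]; ring

lemma H_drop (m : ℕ) (w : List Bool) : (Hph w).drop (11 * m) = Hph (w.drop m) := by
  induction m generalizing w with
  | zero => simp
  | succ m ih =>
    cases w with
    | nil => simp [H_nil]
    | cons a w =>
      rw [H_cons, show 11 * (m+1) = (hph a).length + 11 * m by rw [hlen]; ring,
        List.drop_length_add_append, ih, List.drop_succ_cons]

lemma read (w : List Bool) (m r L : ℕ) (hm : m < w.length) (hL : r + L ≤ 11) :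
    ((Hph w).drop (11 * m + r)).take L = ((hph w[m]).drop r).take L := by
  rw [← List.drop_drop, H_drop, List.drop_eq_getElem_cons hm, H_cons,
    List.drop_append_of_le_length (by rw [hlen]; omega),
    List.take_append_of_le_length (by rw [List.length_drop, hlen]; omega)]

lemma read2 (w : List Bool) (m r L : ℕ) (hm : m + 1 < w.length) (hL : r + L ≤ 22) :
    ((Hph w).drop (11 * m + r)).take L = ((hph w[m] ++ hph w[m+1]).drop r).take L := by
  rw [← List.drop_drop, H_drop, List.drop_eq_getElem_cons (show m < w.length by omega), H_cons,
    List.drop_eq_getElem_cons (show m + 1 < w.length from hm), H_cons, ← List.append_assoc,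
    List.drop_append_of_le_length (by rw [List.length_append, hlen, hlen]; omega),
    List.take_append_of_le_length (by rw [List.length_drop, List.length_append, hlen, hlen]; omega)]

lemma blockRead (w : List Bool) (m L : ℕ) (hm : m < w.length) (hL : L ≤ 11) :
    ((Hph w).drop (11 * m)).take L = (hph w[m]).take L := by
  have h := read w m 0 L hm (by omega)
  simpa using h

lemma Pocc (w : List Bool) (m : ℕ) (hm : m < w.length) :
    ((Hph w).drop (11 * m)).take 8 = Pph := by
  rw [blockRead w m 8 hm (by omega)]
  exact (show ∀ b : Bool, (hph b).take 8 = Pph by decide) w[m]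

lemma sync (w : List Bool) (j : ℕ) (hj : j + 8 ≤ 11 * w.length)
    (hP : ((Hph w).drop j).take 8 = Pph) : j % 11 = 0 := by
  have hdm : 11 * (j / 11) + j % 11 = j := Nat.div_add_mod j 11
  set m := j / 11 with hm'
  set r := j % 11 with hr'
  have hr11 : r < 11 := Nat.mod_lt _ (by norm_num)
  by_contra hr0
  have hmw : m < w.length := by omega
  rw [← hdm] at hP
  by_cases h2 : m + 1 < w.length
  · rw [read2 w m r 8 h2 (by omega)] at hP
    exact (show ∀ a b : Bool, ∀ r' < 11, r' ≠ 0 → ((hph a ++ hph b).drop r').take 8 ≠ Pph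
      by decide) _ _ r hr11 hr0 hP
  · rw [read w m r 8 hmw (by omega)] at hP
    exact (show ∀ a : Bool, ∀ r' < 11, r' ≠ 0 → ((hph a).drop r').take 8 ≠ Pph
      by decide) _ r hr11 hr0 hP

lemma eq_drop_take {a b c l : List Bool} (h : a ++ b ++ c = l) :
    (l.drop a.length).take b.length = b := by
  subst h
  rw [List.append_assoc, List.drop_left, List.take_append_of_le_length le_rfl, List.take_length]

lemma cube_shift {u s x t : List Bool} (hst : s ++ (x ++ x ++ x) ++ t = u) (d L : ℕ)
    (h : d + L + x.length ≤ 3 * x.length) :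
    (u.drop (s.length + d)).take L = (u.drop (s.length + d + x.length)).take L := by
  subst hst
  have hL1 : ((x ++ x ++ x) ++ t).drop d = (x ++ x).drop d ++ (x ++ t) := by
    rw [List.append_assoc (x ++ x) x t]
    exact List.drop_append_of_le_length (by simp; omega)
  have hL2 : ((x ++ x ++ x) ++ t).drop (d + x.length) = (x ++ x).drop d ++ t := by
    rw [show (x ++ x ++ x) ++ t = x ++ ((x ++ x) ++ t) by simp [List.append_assoc],
      show d + x.length = x.length + d by omega, List.drop_length_add_append,
      List.drop_append_of_le_length (by simp; omega)]
  rw [List.append_assoc s (x ++ x ++ x) t,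
    show s.length + d + x.length = s.length + (d + x.length) by omega,
    List.drop_length_add_append, List.drop_length_add_append, hL1, hL2,
    List.take_append_of_le_length (by simp; omega),
    List.take_append_of_le_length (by simp; omega)]

lemma take_shift (w : List Bool) (b q : ℕ) (hb : b + q + q ≤ w.length)
    (hper : ∀ k, k < q → w[b + k]! = w[b + k + q]!) :
    (w.drop b).take q = (w.drop (b + q)).take q := by
  apply List.ext_getElem
  · simp; omega
  · intro k h1 h2
    simp only [List.getElem_take, List.getElem_drop]
    have hk : k < q := by simp at h1; omega
    have h := hper k hk
    rw [getElem!_pos w (b + k) (by omega), getElem!_pos w (b + k + q) (by omega)] at h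
    exact h.trans (getElem_congr rfl (by omega) _)

lemma cube_of_period (w : List Bool) (a q : ℕ) (hq : 0 < q) (hl : a + 3 * q ≤ w.length)
    (hper : ∀ k, k < 2 * q → w[a + k]! = w[a + k + q]!) :
    ∃ y : List Bool, y ≠ [] ∧ y ++ y ++ y <:+: w := by
  have e1 : (w.drop a).take q = (w.drop (a + q)).take q :=
    take_shift w a q (by omega) (fun k hk => hper k (by omega))
  have e2 : (w.drop (a + q)).take q = (w.drop (a + q + q)).take q :=
    take_shift w (a + q) q (by omega) (fun k hk => by
      have h := hper (q + k) (by omega)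
      rw [show a + q + k = a + (q + k) by omega]
      exact h)
  have hsplit : (w.drop a).take (3 * q) =
      (w.drop a).take q ++ ((w.drop (a + q)).take q ++ (w.drop (a + q + q)).take q) := by
    rw [show 3 * q = q + (q + q) by omega, List.take_add, List.take_add,
      List.drop_drop, List.drop_drop]
  refine ⟨(w.drop a).take q, ?_, ?_⟩
  · have hlq : ((w.drop a).take q).length = q := by simp; omega
    intro hnil
    rw [hnil] at hlq
    simp at hlq
    omega
  · have heq : (w.drop a).take q ++ (w.drop a).take q ++ (w.drop a).take q
        = (w.drop a).take (3 * q) := by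
      rw [hsplit, List.append_assoc, e1, e2]
    rw [heq]
    exact ((List.take_prefix _ _).isInfix).trans (List.drop_suffix _ _).isInfix

def CubeAt (u : List Bool) (j p : ℕ) : Prop :=
  (u.drop j).take (3 * p) = (u.drop j).take p ++ (u.drop j).take p ++ (u.drop j).take p

instance (u : List Bool) (j p : ℕ) : Decidable (CubeAt u j p) := by
  unfold CubeAt; infer_instance

def words : ℕ → List (List Bool)
  | 0 => [[]]
  | n + 1 => [] :: (words n).flatMap (fun v => [false :: v, true :: v])

lemma mem_words : ∀ n (v : List Bool), v.length ≤ n → v ∈ words n := by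
  intro n
  induction n with
  | zero =>
    intro v hv
    have : v = [] := List.length_eq_zero_iff.mp (by omega)
    subst this
    simp [words]
  | succ n ih =>
    intro v hv
    cases v with
    | nil => simp [words]
    | cons a v' =>
      simp only [words, List.mem_cons, List.mem_flatMap]
      exact Or.inr ⟨v', ih v' (by simpa using hv), by cases a <;> simp⟩

set_option maxHeartbeats 4000000 in
lemma smallcheck : ∀ v ∈ words 4, ∀ p ∈ Finset.Icc 1 9, ∀ j ∈ Finset.range 45,
    j + 3 * p ≤ (Hph v).length → CubeAt (Hph v) j p →
    ∃ j' ∈ Finset.range 4, ∃ q ∈ Finset.Icc 1 4, j' + 3 * q ≤ v.length ∧ CubeAt v j' q := by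
  decide

lemma cube_to_cubeAt {u x : List Bool} (hinf : x ++ x ++ x <:+: u) :
    ∃ j, j + 3 * x.length ≤ u.length ∧ CubeAt u j x.length := by
  obtain ⟨s, t, hst⟩ := hinf
  have hlen3 : (x ++ x ++ x).length = 3 * x.length := by simp only [List.length_append]; omega
  refine ⟨s.length, ?_, ?_⟩
  · have h := congrArg List.length hst
    simp only [List.length_append] at h
    omega
  · have h3 := eq_drop_take hst
    rw [hlen3] at h3
    have h1 : (u.drop s.length).take x.length = x := by
      have h2 : (u.drop s.length).take x.length
          = ((u.drop s.length).take (3 * x.length)).take x.length := by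
        rw [List.take_take]
        congr 1
        omega
      rw [h2, h3, List.take_append_of_le_length (by simp only [List.length_append]; omega),
        List.take_append_of_le_length le_rfl, List.take_length]
    unfold CubeAt
    rw [h3, h1]

lemma cubeAt_to_cube {v : List Bool} {j q : ℕ} (hq : 0 < q) (hle : j + 3 * q ≤ v.length)
    (hc : CubeAt v j q) : ∃ y : List Bool, y ≠ [] ∧ y ++ y ++ y <:+: v := by
  refine ⟨(v.drop j).take q, ?_, ?_⟩
  · have hl : ((v.drop j).take q).length = q := by simp; omega
    intro hnil
    rw [hnil] at hl
    simp at hl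
    omega
  · rw [← hc]
    exact ((List.take_prefix _ _).isInfix).trans (List.drop_suffix _ _).isInfix

end CF11

open CF11 in
theorem stmt11 :
    CubefreeMorphism (fun b =>
      if b then [false, false, true, false, true, false, false, true, true, false, true]
      else [false, false, true, false, true, false, false, true, false, true, true]) := by
  intro w hw x hx hinf
  have hinf' : x ++ x ++ x <:+: Hph w := hinf
  obtain ⟨s, t, hst⟩ := hinf'
  set p := x.length with hp
  have hp0 : 0 < p := List.length_pos_iff.mpr hx
  set i := s.length with hi
  have hlu : i + 3 * p + t.length = 11 * w.length := by
    have h := congrArg List.length hst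
    rw [Hlen] at h
    simp only [List.length_append] at h
    omega
  have shift : ∀ d L : ℕ, d + L + p ≤ 3 * p →
      ((Hph w).drop (i + d)).take L = ((Hph w).drop (i + d + p)).take L :=
    fun d L h => cube_shift hst d L h
  have hdm : 11 * (i / 11) + i % 11 = i := Nat.div_add_mod i 11
  set M := i / 11 with hM
  set r := i % 11 with hr
  have hr11 : r < 11 := Nat.mod_lt _ (by norm_num)
  by_cases hps : p ≤ 9
  · -- small periods: finite check
    have hdropM : Hph (w.drop M) = s.drop (11 * M) ++ ((x ++ x ++ x) ++ t) := by
      rw [← H_drop, ← hst, List.append_assoc, List.drop_append_of_le_length (by omega)]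
    set v : List Bool := (w.drop M).take 4 with hv
    have hvw : v <:+: w := ((List.take_prefix _ _).isInfix).trans (List.drop_suffix _ _).isInfix
    have hvlen : v.length ≤ 4 := List.length_take_le _ _
    have hvin : x ++ x ++ x <:+: Hph v := by
      by_cases hlw : w.length ≤ M + 4
      · have hveq : v = w.drop M := List.take_of_length_le (by simp; omega)
        rw [hveq, hdropM]
        exact ⟨s.drop (11 * M), t, List.append_assoc _ _ _⟩
      · have hv4 : v.length = 4 := by simp [hv]; omega
        have heq : (s.drop (11 * M)) ++ (x ++ x ++ x) ++ t
            = Hph v ++ Hph ((w.drop M).drop 4) := by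
          rw [hv, ← H_append, List.take_append_drop, hdropM, List.append_assoc]
        have h3 := eq_drop_take heq
        rw [List.length_drop] at h3
        rw [show i - 11 * M = r by omega] at h3
        rw [show (x ++ x ++ x).length = 3 * p by simp only [List.length_append]; omega] at h3
        rw [List.drop_append_of_le_length (by rw [Hlen, hv4]; omega),
          List.take_append_of_le_length (by rw [List.length_drop, Hlen, hv4]; omega)] at h3
        rw [← h3]
        exact ((List.take_prefix _ _).isInfix).trans (List.drop_suffix _ _).isInfix
    obtain ⟨j, hj, hcube⟩ := cube_to_cubeAt hvin
    rw [← hp] at hj hcube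
    have hjb : j < 45 := by
      have := Hlen v
      omega
    obtain ⟨j', hj', q, hq', hle, hc'⟩ := smallcheck v (mem_words 4 v hvlen) p
      (Finset.mem_Icc.mpr ⟨hp0, hps⟩) j (Finset.mem_range.mpr hjb) hj hcube
    obtain ⟨y, hy, hyy⟩ := cubeAt_to_cube (Finset.mem_Icc.mp hq').1 hle hc'
    exact hw y hy (hyy.trans hvw)
  · -- large periods: synchronization
    push_neg at hps
    have hMw : M + 1 < w.length := by omega
    have hA : ((Hph w).drop (11 * (M + 1))).take 8 = Pph := Pocc w (M + 1) hMw
    have hA2 : ((Hph w).drop (11 * (M + 1) + p)).take 8 = Pph := by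
      have hs := shift (11 - r) 8 (by omega)
      rw [show i + (11 - r) = 11 * (M + 1) by omega] at hs
      rw [← hs]
      exact hA
    have hdiv : (11 * (M + 1) + p) % 11 = 0 := sync w _ (by omega) hA2
    have hq11 : p % 11 = 0 := by omega
    set q := p / 11 with hqdef
    have hpq : p = 11 * q := by omega
    have hq1 : 1 ≤ q := by omega
    have blockEq : ∀ m, i ≤ 11 * m → 11 * m + 11 + p ≤ i + 3 * p →
        w[m]! = w[m + q]! := by
      intro m h1 h2
      have hmw' : m < w.length := by omega
      have hmqw : m + q < w.length := by omega
      have hs := shift (11 * m - i) 11 (by omega)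
      rw [show i + (11 * m - i) = 11 * m by omega] at hs
      rw [show 11 * m + p = 11 * (m + q) by omega] at hs
      rw [blockRead w m 11 hmw' (by omega), blockRead w (m + q) 11 hmqw (by omega),
        List.take_of_length_le (hlen _).le, List.take_of_length_le (hlen _).le] at hs
      have hab := (show ∀ a b : Bool, hph a = hph b → a = b by decide) _ _ hs
      rw [getElem!_pos w m hmw', getElem!_pos w (m + q) hmqw]
      exact hab
    rcases (show r = 0 ∨ (1 ≤ r ∧ r ≤ 9) ∨ r = 10 by omega) with h0 | h19 | h10
    · have hper : ∀ k, k < 2 * q → w[M + k]! = w[M + k + q]! := by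
        intro k hk
        exact blockEq (M + k) (by omega) (by omega)
      obtain ⟨y, hy, hyy⟩ := cube_of_period w M q (by omega) (by omega) hper
      exact hw y hy hyy
    · have hMw0 : M < w.length := by omega
      have hMqw : M + q < w.length := by omega
      have hpartial : w[M]! = w[M + q]! := by
        have hs := shift 0 (11 - r) (by omega)
        rw [Nat.add_zero] at hs
        rw [show i = 11 * M + r by omega] at hs
        rw [show 11 * M + r + p = 11 * (M + q) + r by omega] at hs
        rw [read w M r (11 - r) hMw0 (by omega), read w (M + q) r (11 - r) hMqw (by omega),
          List.take_of_length_le (by rw [List.length_drop, hlen]),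
          List.take_of_length_le (by rw [List.length_drop, hlen])] at hs
        have hab := (show ∀ a b : Bool, ∀ r' < 10, (hph a).drop r' = (hph b).drop r' → a = b
          by decide) _ _ r (by omega) hs
        rw [getElem!_pos w M hMw0, getElem!_pos w (M + q) hMqw]
        exact hab
      have hper : ∀ k, k < 2 * q → w[M + k]! = w[M + k + q]! := by
        intro k hk
        rcases Nat.eq_zero_or_pos k with hk0 | hk1
        · subst hk0
          simpa using hpartial
        · exact blockEq (M + k) (by omega) (by omega)
      obtain ⟨y, hy, hyy⟩ := cube_of_period w M q (by omega) (by omega) hper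
      exact hw y hy hyy
    · have h2qw : M + 2 * q < w.length := by omega
      have h3qw : M + 3 * q < w.length := by omega
      have htop : w[M + 2 * q]! = w[M + 3 * q]! := by
        have hs := shift (22 * q - 10) 10 (by omega)
        rw [show i + (22 * q - 10) = 11 * (M + 2 * q) by omega,
          show 11 * (M + 2 * q) + p = 11 * (M + 3 * q) by omega] at hs
        rw [blockRead w (M + 2 * q) 10 h2qw (by omega),
          blockRead w (M + 3 * q) 10 h3qw (by omega)] at hs
        have hab := (show ∀ a b : Bool, (hph a).take 10 = (hph b).take 10 → a = b
          by decide) _ _ hs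
        rw [getElem!_pos w _ h2qw, getElem!_pos w _ h3qw]
        exact hab
      have hper : ∀ k, k < 2 * q → w[(M + 1) + k]! = w[(M + 1) + k + q]! := by
        intro k hk
        rcases (show k ≤ 2 * q - 2 ∨ k = 2 * q - 1 by omega) with hk' | hk'
        · exact blockEq (M + 1 + k) (by omega) (by omega)
        · rw [show M + 1 + k + q = M + 3 * q by omega, show M + 1 + k = M + 2 * q by omega]
          exact htop
      obtain ⟨y, hy, hyy⟩ := cube_of_period w (M + 1) q (by omega) (by omega) hper
      exact hw y hy hyy
end

section
/- The 13-uniform binary morphism φ₁₃ defined by φ₁₃(0) = 0010010110011 and φ₁₃(1) = 0010011001011 is cubefree: φ₁₃(w) is cubefree for every cubefree binary word w. -/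
def hm : Bool → List Bool := fun b =>
  if b then [false, false, true, false, false, true, true, false, false, true, false, true, true]
  else [false, false, true, false, false, true, false, true, true, false, false, true, true]

def enc : List Bool → ℕ
  | [] => 0
  | b :: t => (bif b then 1 else 0) + 2 * enc t

def noCubeN (len L : ℕ) : Bool :=
  (List.range (len / 3)).all fun n =>
    (List.range (len + 1 - 3 * (n+1))).all fun i =>
      (L >>> i) % 2 ^ (2*(n+1)) != (L >>> (i + (n+1))) % 2 ^ (2*(n+1))

def natImage : ℕ → ℕ → ℕ
  | 0, _ => 0
  | len+1, b => enc (hm (b % 2 == 1)) + 2^13 * natImage len (b / 2)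

set_option maxRecDepth 10000 in
set_option maxHeartbeats 4000000 in
lemma checkAll : ((List.range 8).all fun len => (List.range (2^len)).all fun b =>
    !(noCubeN len b) || noCubeN (13*len) (natImage len b)) = true := by decide

lemma sync_check : ∀ a b c : Bool, ((List.range 12).all fun p =>
    ((hm b ++ hm c).drop (p+1)).take 13 != hm a) = true := by decide

lemma inj6 : ∀ a b : Bool, (hm a).getD 6 false = (hm b).getD 6 false → a = b := by decide
lemma inj9 : ∀ a b : Bool, (hm a).getD 9 false = (hm b).getD 9 false → a = b := by decide

lemma enc_lt : ∀ l : List Bool, enc l < 2 ^ l.length := by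
  intro l; induction l with
  | nil => simp [enc]
  | cons b t ih =>
    simp only [enc, List.length_cons, pow_succ]
    cases b <;> simp <;> omega

lemma enc_append : ∀ a b : List Bool, enc (a ++ b) = enc a + 2 ^ a.length * enc b := by
  intro a; induction a with
  | nil => simp [enc]
  | cons x t ih =>
    intro b
    rw [List.cons_append]
    show (bif x then 1 else 0) + 2 * enc (t ++ b) = _
    rw [ih]
    simp only [enc, List.length_cons, pow_succ]
    ring

lemma enc_drop : ∀ (i : ℕ) (l : List Bool), enc (l.drop i) = enc l / 2 ^ i := by
  intro i; induction i with
  | zero => simp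
  | succ i ih =>
    intro l
    cases l with
    | nil => simp [enc]
    | cons b t =>
      rw [List.drop_succ_cons, ih, pow_succ]
      have : enc (b :: t) / 2 = enc t := by
        simp only [enc]; cases b <;> simp <;> omega
      rw [← this, Nat.div_div_eq_div_mul, Nat.mul_comm]

lemma enc_take : ∀ (k : ℕ) (l : List Bool), enc (l.take k) = enc l % 2 ^ k := by
  intro k l
  have h1 : enc l = enc (l.take k) + 2 ^ (l.take k).length * enc (l.drop k) := by
    conv_lhs => rw [← List.take_append_drop k l]
    rw [enc_append]
  rcases le_or_gt l.length k with h | h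
  · rw [List.take_of_length_le h]
    exact (Nat.mod_eq_of_lt (lt_of_lt_of_le (enc_lt l) (Nat.pow_le_pow_right (by norm_num) h))).symm
  · have hlen : (l.take k).length = k := by simp; omega
    rw [hlen] at h1
    rw [h1, Nat.add_mul_mod_self_left]
    have h2 := enc_lt (l.take k)
    rw [hlen] at h2
    exact (Nat.mod_eq_of_lt h2).symm

lemma enc_inj : ∀ l l' : List Bool, l.length = l'.length → enc l = enc l' → l = l' := by
  intro l; induction l with
  | nil => intro l' h _; cases l' <;> simp_all
  | cons b t ih =>
    intro l' h he
    cases l' with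
    | nil => simp at h
    | cons b' t' =>
      simp only [enc] at he
      have hb : b = b' := by cases b <;> cases b' <;> simp_all <;> omega
      subst hb
      have : enc t = enc t' := by cases b <;> simp at he <;> omega
      simp_all [ih t' (by simpa using h) this]

lemma cubefree_infix {w u : List Bool} (h : Cubefree w) (hu : u <:+: w) : Cubefree u :=
  fun x hx hxu => h x hx (hxu.trans hu)

lemma getD_drop' (l : List Bool) (d o : ℕ) : (l.drop d).getD o false = l.getD (d+o) false := by
  rw [List.getD_eq_getElem?_getD, List.getD_eq_getElem?_getD, List.getElem?_drop]

lemma getD_take' (l : List Bool) (k o : ℕ) (h : o < k) :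
    (l.take k).getD o false = l.getD o false := by
  rw [List.getD_eq_getElem?_getD, List.getD_eq_getElem?_getD, List.getElem?_take, if_pos h]

lemma infix_of_seg (L : List Bool) (i q : ℕ) : (L.drop i).take q <:+: L :=
  ((List.take_prefix q (L.drop i)).isInfix).trans (List.drop_suffix i L).isInfix

lemma seg_of_infix {u L : List Bool} (h : u <:+: L) :
    ∃ i, i + u.length ≤ L.length ∧ u = (L.drop i).take u.length := by
  obtain ⟨p, s, hps⟩ := h
  refine ⟨p.length, ?_, ?_⟩
  · have := congrArg List.length hps
    simp only [List.length_append] at this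
    omega
  · rw [← hps, List.append_assoc, List.drop_left, List.take_append_of_le_length le_rfl,
      List.take_of_length_le le_rfl]

lemma triple_getD (x : List Bool) (j : ℕ) (h : j < 3 * x.length) :
    (x ++ x ++ x).getD j false = x.getD (j % x.length) false := by
  have hn : 0 < x.length := by omega
  rcases lt_or_ge j x.length with h1 | h1
  · rw [Nat.mod_eq_of_lt h1,
      List.getD_append _ _ _ _ (by simp only [List.length_append]; omega),
      List.getD_append _ _ _ _ h1]
  rcases lt_or_ge j (2 * x.length) with h2 | h2
  · rw [List.getD_append _ _ _ _ (by simp only [List.length_append]; omega),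
      List.getD_append_right _ _ _ _ h1]
    have hm2 : j % x.length = j - x.length := by
      conv_lhs => rw [show j = x.length + (j - x.length) by omega]
      rw [Nat.add_mod_left, Nat.mod_eq_of_lt (by omega)]
    rw [hm2]
  · rw [List.getD_append_right _ _ _ _ (by simp only [List.length_append]; omega)]
    have hidx : j - (x ++ x).length = j - 2 * x.length := by
      simp only [List.length_append]; omega
    have hm2 : j % x.length = j - 2 * x.length := by
      conv_lhs => rw [show j = x.length + (x.length + (j - 2 * x.length)) by omega]
      rw [Nat.add_mod_left, Nat.add_mod_left, Nat.mod_eq_of_lt (by omega)]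
    rw [hidx, hm2]

lemma cube_of_period (w : List Bool) (a m : ℕ) (hm0 : 0 < m) (hle : a + 3 * m ≤ w.length)
    (hp : ∀ j, a ≤ j → j < a + 2 * m → w.getD j false = w.getD (j + m) false) :
    ¬ Cubefree w := by
  intro hcf
  set x := (w.drop a).take m with hxdef
  have hxlen : x.length = m := by simp [hxdef]; omega
  have hxx : x ++ x ++ x = (w.drop a).take (3 * m) := by
    apply List.ext_getElem
    · simp only [List.length_append, hxlen, List.length_take, List.length_drop]; omega
    · intro j hj1 hj2
      have hj : j < 3 * m := by
        simp only [List.length_append, hxlen] at hj1; omega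
      rw [← List.getD_eq_getElem _ false, ← List.getD_eq_getElem _ false,
        triple_getD x j (by rw [hxlen]; omega), getD_take' _ _ _ hj, getD_drop', hxlen,
        getD_take' _ _ _ (by have := Nat.mod_lt j hm0; omega), getD_drop']
      have hmod := Nat.mod_lt j hm0
      rcases lt_or_ge j m with hc | hc
      · rw [Nat.mod_eq_of_lt hc]
      · rcases lt_or_ge j (2 * m) with hc2 | hc2
        · have hm2 : j % m = j - m := by
            conv_lhs => rw [show j = m + (j - m) by omega]
            rw [Nat.add_mod_left, Nat.mod_eq_of_lt (by omega)]
          have h1 := hp (a + (j - m)) (by omega) (by omega)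
          rw [hm2, show a + j = a + (j - m) + m by omega]
          exact h1
        · have hm2 : j % m = j - 2 * m := by
            conv_lhs => rw [show j = m + (m + (j - 2 * m)) by omega]
            rw [Nat.add_mod_left, Nat.add_mod_left, Nat.mod_eq_of_lt (by omega)]
          have h1 := hp (a + (j - 2 * m)) (by omega) (by omega)
          have h2 := hp (a + (j - 2 * m) + m) (by omega) (by omega)
          rw [hm2, show a + j = a + (j - 2 * m) + m + m by omega, ← h2, ← h1]
  have hxne : x ≠ [] := by
    have : 0 < x.length := by rw [hxlen]; exact hm0
    exact List.length_pos_iff.1 this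
  exact hcf x hxne (hxx ▸ infix_of_seg w a (3 * m))

lemma noCubeN_correct (w : List Bool) (h : noCubeN w.length (enc w) = true) : Cubefree w := by
  intro x hx hinf
  obtain ⟨p, s, hps⟩ := hinf
  set n := x.length with hn
  have hn1 : 0 < n := List.length_pos_iff.2 hx
  have hwl := congrArg List.length hps
  simp only [List.length_append] at hwl
  set i := p.length with hi
  have hdi : w.drop i = x ++ (x ++ (x ++ s)) := by
    rw [← hps, List.append_assoc, List.drop_left]
    simp [List.append_assoc]
  have key : (w.drop i).take (2 * n) = (w.drop (i + n)).take (2 * n) := by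
    have h1 : (w.drop i).take (2 * n) = x ++ x := by
      rw [hdi, show 2 * n = x.length + x.length by omega, List.take_length_add_append,
        List.take_append_of_le_length le_rfl, List.take_of_length_le le_rfl]
    have h2 : (w.drop (i + n)).take (2 * n) = x ++ x := by
      have : w.drop (i + n) = x ++ (x ++ s) := by
        rw [← List.drop_drop, hdi, hn, List.drop_left]
      rw [this, show 2 * n = x.length + x.length by omega, List.take_length_add_append,
        List.take_append_of_le_length le_rfl, List.take_of_length_le le_rfl]
    rw [h1, h2]
  rw [noCubeN, List.all_eq_true] at h
  have h' := h (n - 1) (by rw [List.mem_range]; omega)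
  rw [List.all_eq_true] at h'
  have h'' := h' i (by rw [List.mem_range]; omega)
  rw [show n - 1 + 1 = n by omega, bne_iff_ne] at h''
  apply h''
  have e1 : (enc w >>> i) % 2 ^ (2 * n) = enc ((w.drop i).take (2 * n)) := by
    rw [enc_take, enc_drop, Nat.shiftRight_eq_div_pow]
  have e2 : (enc w >>> (i + n)) % 2 ^ (2 * n) = enc ((w.drop (i + n)).take (2 * n)) := by
    rw [enc_take, enc_drop, Nat.shiftRight_eq_div_pow]
  rw [e1, e2, key]

lemma noCubeN_complete (w : List Bool) (h : Cubefree w) : noCubeN w.length (enc w) = true := by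
  rw [noCubeN, List.all_eq_true]
  intro n hn
  rw [List.all_eq_true]
  intro i hi
  rw [List.mem_range] at hn hi
  set m := n + 1 with hmdef
  have h3m : i + 3 * m ≤ w.length := by omega
  rw [bne_iff_ne]
  intro heq
  have e1 : (enc w >>> i) % 2 ^ (2 * m) = enc ((w.drop i).take (2 * m)) := by
    rw [enc_take, enc_drop, Nat.shiftRight_eq_div_pow]
  have e2 : (enc w >>> (i + m)) % 2 ^ (2 * m) = enc ((w.drop (i + m)).take (2 * m)) := by
    rw [enc_take, enc_drop, Nat.shiftRight_eq_div_pow]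
  rw [e1, e2] at heq
  have hlist : (w.drop i).take (2 * m) = (w.drop (i + m)).take (2 * m) := by
    apply enc_inj _ _ _ heq
    simp only [List.length_take, List.length_drop]
    omega
  have hper : ∀ j, i ≤ j → j < i + 2 * m → w.getD j false = w.getD (j + m) false := by
    intro j hj1 hj2
    have := congrArg (fun l => l.getD (j - i) false) hlist
    rw [getD_take' _ _ _ (by omega), getD_drop', getD_take' _ _ _ (by omega), getD_drop'] at this
    rw [show i + (j - i) = j by omega] at this
    rw [this, show i + m + (j - i) = j + m by omega]
  exact cube_of_period w i m (by omega) h3m hper h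

lemma len13 : ∀ w : List Bool, (w.flatMap hm).length = 13 * w.length := by
  intro w; induction w with
  | nil => rfl
  | cons b t ih =>
    rw [List.flatMap_cons, List.length_append, ih, List.length_cons]
    have : (hm b).length = 13 := by cases b <;> rfl
    omega

lemma block13 : ∀ (w : List Bool) (j o : ℕ), j < w.length → o < 13 →
    (w.flatMap hm).getD (13 * j + o) false = (hm (w.getD j false)).getD o false := by
  intro w; induction w with
  | nil => intro j o hj _; simp at hj
  | cons b t ih =>
    intro j o hj ho
    rw [List.flatMap_cons]
    cases j with
    | zero =>
      simp only [Nat.mul_zero, Nat.zero_add, List.getD_cons_zero]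
      have hlen : (hm b).length = 13 := by cases b <;> rfl
      exact List.getD_append _ _ _ _ (by omega)
    | succ j =>
      have hlen : (hm b).length = 13 := by cases b <;> rfl
      rw [List.getD_append_right _ _ _ _ (by omega), List.getD_cons_succ]
      rw [show 13 * (j + 1) + o - (hm b).length = 13 * j + o by omega]
      exact ih j o (by simpa using hj) ho

lemma natImage_enc : ∀ v : List Bool, natImage v.length (enc v) = enc (v.flatMap hm) := by
  intro v; induction v with
  | nil => rfl
  | cons b t ih =>
    rw [List.length_cons, List.flatMap_cons, enc_append,
      show (hm b).length = 13 by cases b <;> rfl]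
    show enc (hm ((enc (b :: t)) % 2 == 1)) + 2 ^ 13 * natImage t.length (enc (b :: t) / 2) = _
    have hmod : enc (b :: t) % 2 = (bif b then 1 else 0) := by
      simp only [enc]; cases b <;> simp <;> omega
    have hdiv : enc (b :: t) / 2 = enc t := by
      simp only [enc]; cases b <;> simp <;> omega
    rw [hmod, hdiv, ih]
    cases b <;> rfl

lemma short_check : ∀ v : List Bool, v.length ≤ 7 → Cubefree v → Cubefree (v.flatMap hm) := by
  intro v hlen hcf
  have h1 : noCubeN v.length (enc v) = true := noCubeN_complete v hcf
  have h2 := checkAll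
  rw [List.all_eq_true] at h2
  have h3 := h2 v.length (by rw [List.mem_range]; omega)
  rw [List.all_eq_true] at h3
  have h4 := h3 (enc v) (by rw [List.mem_range]; exact enc_lt v)
  rw [h1, natImage_enc] at h4
  simp only [Bool.not_true, Bool.false_or] at h4
  rw [← len13] at h4
  exact noCubeN_correct _ h4

lemma take_drop_append (C D : List Bool) (j q : ℕ) (h : j + q ≤ C.length) :
    ((C ++ D).drop j).take q = (C.drop j).take q := by
  rw [List.drop_append_of_le_length (by omega),
    List.take_append_of_le_length (by rw [List.length_drop]; omega)]

lemma hm_len : ∀ b : Bool, (hm b).length = 13 := by decide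

lemma drop_append_ge (A B : List Bool) (t : ℕ) (h : A.length ≤ t) :
    (A ++ B).drop t = B.drop (t - A.length) := by
  rw [show t = A.length + (t - A.length) by omega, List.drop_length_add_append]
  congr 1
  omega

theorem stmt12 :
    CubefreeMorphism (fun b =>
      if b then [false, false, true, false, false, true, true, false, false, true, false, true, true]
      else [false, false, true, false, false, true, false, true, true, false, false, true, true]) := by
  intro w hw
  show Cubefree (w.flatMap hm)
  intro x hx hinf
  obtain ⟨i, hilen, hix⟩ := seg_of_infix hinf
  obtain ⟨n, hnx⟩ : ∃ n, x.length = n := ⟨_, rfl⟩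
  have hn1 : 0 < n := hnx ▸ List.length_pos_iff.2 hx
  have hu3 : (x ++ x ++ x).length = 3 * n := by simp only [List.length_append]; omega
  rw [hu3] at hix hilen
  rw [len13] at hilen
  have hget : ∀ j, j < 3 * n → (w.flatMap hm).getD (i + j) false = x.getD (j % n) false := by
    intro j hj
    rw [← getD_drop', ← getD_take' ((w.flatMap hm).drop i) (3*n) j hj, ← hix,
      triple_getD x j (by omega), hnx]
  have hper : ∀ t, i ≤ t → t + n < i + 3 * n →
      (w.flatMap hm).getD t false = (w.flatMap hm).getD (t + n) false := by
    intro t h1 h2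
    have e1 := hget (t - i) (by omega)
    have e2 := hget (t - i + n) (by omega)
    rw [show i + (t - i) = t by omega] at e1
    rw [show i + (t - i + n) = t + n by omega, Nat.add_mod_right] at e2
    rw [e1, e2]
  have hdm13 : 13 * (i / 13) + i % 13 = i := Nat.div_add_mod i 13
  have hmod13 : i % 13 < 13 := Nat.mod_lt _ (by norm_num)
  by_cases hshort : n ≤ 25
  -- Case 1: short cube, lives inside the image of a factor of length ≤ 7
  · have haN : i / 13 < w.length := by omega
    have hvcf : Cubefree ((w.drop (i/13)).take 7) :=
      cubefree_infix hw (infix_of_seg w (i/13) 7)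
    have hvlen : ((w.drop (i/13)).take 7).length ≤ 7 := by
      rw [List.length_take]; omega
    have himg := short_check _ hvlen hvcf
    apply himg x hx
    have hsplit : w.flatMap hm = (w.take (i/13)).flatMap hm ++ (w.drop (i/13)).flatMap hm := by
      rw [← List.flatMap_append, List.take_append_drop]
    have hlenA : ((w.take (i/13)).flatMap hm).length = 13 * (i/13) := by
      rw [len13, List.length_take]
      have : min (i/13) w.length = i/13 := min_eq_left haN.le
      rw [this]
    have h2 : x ++ x ++ x = (((w.drop (i/13)).flatMap hm).drop (i - 13 * (i/13))).take (3 * n) := by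
      rw [hix, hsplit, drop_append_ge _ _ _ (by rw [hlenA]; omega), hlenA]
    by_cases hN7 : i/13 + 7 ≤ w.length
    · have hdropv : (w.drop (i/13)).flatMap hm
          = ((w.drop (i/13)).take 7).flatMap hm ++ ((w.drop (i/13)).drop 7).flatMap hm := by
        rw [← List.flatMap_append, List.take_append_drop]
      rw [hdropv] at h2
      have hlenv : (((w.drop (i/13)).take 7).flatMap hm).length = 91 := by
        rw [len13, List.length_take, List.length_drop]
        have : min 7 (w.length - i/13) = 7 := by omega
        rw [this]
      rw [h2, take_drop_append _ _ _ _ (by rw [hlenv]; omega)]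
      exact infix_of_seg _ _ _
    · have hvall : (w.drop (i/13)).take 7 = w.drop (i/13) :=
        List.take_of_length_le (by rw [List.length_drop]; omega)
      rw [hvall, h2]
      exact infix_of_seg _ _ _
  -- Case 2: long cube, synchronization
  · push_neg at hshort
    have hdvd : n % 13 = 0 := by
      by_contra hne
      have hTq : 13 * ((13 * (i/13 + 1) + n) / 13) + (13 * (i/13 + 1) + n) % 13
          = 13 * (i/13 + 1) + n := Nat.div_add_mod _ 13
      have hTr : (13 * (i/13 + 1) + n) % 13 < 13 := Nat.mod_lt _ (by norm_num)
      have hTrn : (13 * (i/13 + 1) + n) % 13 = n % 13 := by omega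
      set T := 13 * (i/13 + 1) + n with hT
      set q' := T / 13 with hq'
      set r' := T % 13 with hr'
      have hr0 : 0 < r' := by omega
      have hq'N : q' + 1 < w.length := by omega
      have hq1N : i/13 + 1 < w.length := by omega
      have hkey : ∀ o, o < 13 →
          ((hm (w.getD q' false) ++ hm (w.getD (q' + 1) false)).drop r').getD o false
            = (hm (w.getD (i/13 + 1) false)).getD o false := by
        intro o ho
        rw [getD_drop', ← block13 w (i/13 + 1) o hq1N ho,
          hper (13 * (i/13 + 1) + o) (by omega) (by omega)]
        rcases lt_or_ge (r' + o) 13 with hlt | hge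
        · rw [List.getD_append _ _ _ _ (by rw [hm_len]; omega),
            ← block13 w q' (r' + o) (by omega) hlt,
            show 13 * q' + (r' + o) = 13 * (i/13 + 1) + o + n by omega]
        · rw [List.getD_append_right _ _ _ _ (by rw [hm_len]; omega), hm_len,
            ← block13 w (q' + 1) (r' + o - 13) (by omega) (by omega),
            show 13 * (q' + 1) + (r' + o - 13) = 13 * (i/13 + 1) + o + n by omega]
      have hlist : ((hm (w.getD q' false) ++ hm (w.getD (q' + 1) false)).drop r').take 13
          = hm (w.getD (i/13 + 1) false) := by
        apply List.ext_getElem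
        · simp only [List.length_take, List.length_drop, List.length_append, hm_len]
          omega
        · intro o h1 h2
          have ho : o < 13 := by simp only [List.length_take] at h1; omega
          rw [← List.getD_eq_getElem _ false, ← List.getD_eq_getElem _ false,
            getD_take' _ _ _ ho]
          exact hkey o ho
      have hs := sync_check (w.getD (i/13 + 1) false) (w.getD q' false) (w.getD (q' + 1) false)
      rw [List.all_eq_true] at hs
      have hs2 := hs (r' - 1) (by rw [List.mem_range]; omega)
      rw [bne_iff_ne, show r' - 1 + 1 = r' by omega] at hs2
      exact hs2 hlist
    have hnm : n = 13 * (n / 13) := by omega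
    set m := n / 13 with hmq
    have hm2 : 2 ≤ m := by omega
    have hfull : ∀ j, i ≤ 13 * j → 13 * j + 13 ≤ i + 2 * n →
        w.getD j false = w.getD (j + m) false := by
      intro j h1 h2
      apply inj6
      rw [← block13 w j 6 (by omega) (by norm_num),
        ← block13 w (j + m) 6 (by omega) (by norm_num),
        hper (13 * j + 6) (by omega) (by omega),
        show 13 * j + 6 + n = 13 * (j + m) + 6 by omega]
    by_cases hr9 : i % 13 ≤ 9
    · have hq0 : w.getD (i/13) false = w.getD (i/13 + m) false := by
        apply inj9
        rw [← block13 w (i/13) 9 (by omega) (by norm_num),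
          ← block13 w (i/13 + m) 9 (by omega) (by norm_num),
          hper (13 * (i/13) + 9) (by omega) (by omega),
          show 13 * (i/13) + 9 + n = 13 * (i/13 + m) + 9 by omega]
      refine cube_of_period w (i/13) m (by omega) (by omega) ?_ hw
      intro j hj1 hj2
      rcases eq_or_lt_of_le hj1 with he | hlt
      · exact he ▸ hq0
      · exact hfull j (by omega) (by omega)
    · have hq0 : w.getD (i/13 + 2*m) false = w.getD (i/13 + 3*m) false := by
        apply inj6
        rw [← block13 w (i/13 + 2*m) 6 (by omega) (by norm_num),
          ← block13 w (i/13 + 3*m) 6 (by omega) (by norm_num),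
          hper (13 * (i/13 + 2*m) + 6) (by omega) (by omega),
          show 13 * (i/13 + 2*m) + 6 + n = 13 * (i/13 + 3*m) + 6 by omega]
      refine cube_of_period w (i/13 + 1) m (by omega) (by omega) ?_ hw
      intro j hj1 hj2
      by_cases he : j = i/13 + 2*m
      · rw [he, show i/13 + 2*m + m = i/13 + 3*m by omega]
        exact hq0
      · exact hfull j (by omega) (by omega)
end
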